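/- arXiv:1605.02859 — 2 statements merged into one kernel-verified Lean document; each statement's English description precedes it below -/
import Mathlib

section
/- Suppose λ = λ' is a self-conjugate partition of n and w ∈ A_n is an even permutation. Then χ^{λ±}_A(A_w) = (1/2)(χ^λ(T_w) ± χ^λ(T_w τ)), where A_w = (1/2)(T_w + T_w^#) and χ^λ(T_w τ) is the trace on S(λ) of right multiplication by T_w composed with τ. -/
open scoped Classical

noncomputable section

/-- The simple transposition swapping `i` and `i+1` (0-indexed; this is the Coxeter
generator `s_{i+1}` in 1-indexed notation) in the symmetric group on `Fin n`. -/
def sTr (n i : ℕ) : Equiv.Perm (Fin n) :=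
  if h : i + 1 < n then Equiv.swap ⟨i, Nat.lt_of_succ_lt h⟩ ⟨i + 1, h⟩ else 1

/-- The Coxeter length: the minimal length of an expression of `w` as a product of
simple transpositions. -/
def len (n : ℕ) (w : Equiv.Perm (Fin n)) : ℕ :=
  sInf {k | ∃ l : List ℕ, l.length = k ∧ (∀ i ∈ l, i + 1 < n) ∧ w = (l.map (sTr n)).prod}

/-- The (strict) Bruhat order on the symmetric group: `y < z` iff `z` can be obtained
from `y` by successively multiplying by reflections, increasing the length at each step. -/
def bruhatLT (n : ℕ) (y z : Equiv.Perm (Fin n)) : Prop :=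
  Relation.TransGen
    (fun a b => (∃ u v : Fin n, u ≠ v ∧ b = a * Equiv.swap u v) ∧ len n a < len n b) y z

/-- `y ≺ z` iff `y < z` in the Bruhat order and `ℓ(y) ≢ ℓ(z) (mod 2)`. -/
def precLT (n : ℕ) (y z : Equiv.Perm (Fin n)) : Prop :=
  bruhatLT n y z ∧ ¬ (len n y % 2 = len n z % 2)

/-- The element `A_z = ½(T_z + ε_z T_z^#)`. -/
def Aelt {R H : Type*} [CommRing R] [Ring H] [Algebra R H] (n : ℕ)
    (T : Equiv.Perm (Fin n) → H) (hash : H ≃ₐ[R] H) (z : Equiv.Perm (Fin n)) : H :=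
  Ring.inverse (2 : R) • (T z + ((-1 : R) ^ len n z) • hash (T z))

/-- The `ε`-eigenspace `H^ε = {h ∈ H : h^# = ε h}` of an algebra automorphism,
viewed as an `R`-submodule. -/
def fixedSubmodule {R H : Type*} [CommRing R] [Ring H] [Algebra R H]
    (φ : H ≃ₐ[R] H) (ε : R) : Submodule R H where
  carrier := {x | φ x = ε • x}
  add_mem' := by
    intro a b ha hb
    simp only [Set.mem_setOf_eq] at *
    rw [map_add, ha, hb, smul_add]
  zero_mem' := by simp
  smul_mem' := by
    intro c a ha
    simp only [Set.mem_setOf_eq] at *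
    rw [map_smul, ha, smul_smul, smul_smul, mul_comm]

/-- The quantum integer `[k] = q + q³ + ⋯ + q^{2k−1}` for `k ≥ 0`, and
`[k] = −q⁻¹ − q⁻³ − ⋯ − q^{2k+1}` for `k < 0`. -/
def qint {F : Type*} [Field F] (q : F) : ℤ → F
  | Int.ofNat k => ∑ j ∈ Finset.range k, q ^ (2 * j + 1)
  | Int.negSucc k => -∑ j ∈ Finset.range (k + 1), (q ^ (2 * j + 1))⁻¹

/-- The coefficients `α_k = √(−1)·√([k+1])·√([k−1])/[k]` for `k > 0`, with
`α_{−k} = −α_k` (and `α_0 = 0`). -/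
def alph {F : Type*} [Field F] (q sqm1 : F) (sq : ℕ → F) (m : ℤ) : F :=
  if 0 ≤ m then sqm1 * sq (m.toNat + 1) * sq (m.toNat - 1) / qint q m
  else -(sqm1 * sq ((-m).toNat + 1) * sq ((-m).toNat - 1) / qint q (-m))

/-- A standard `μ`-tableau, recorded by the positions of its entries: `pos k` is the
cell containing the entry `k+1`.  Standardness means the entries are distinct cells
of `μ` and `t(r,c) < t(s,d)` whenever `(r,c) ≠ (s,d)`, `r ≤ s` and `c ≤ d`. -/
def IsStdTab (μ : YoungDiagram) {n : ℕ} (pos : Fin n → ℕ × ℕ) : Prop :=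
  Function.Injective pos ∧ (∀ k, pos k ∈ μ) ∧
    ∀ j k : Fin n, (pos j).1 ≤ (pos k).1 → (pos j).2 ≤ (pos k).2 → pos j ≠ pos k → j < k

/-- The type of standard `μ`-tableaux with `n` entries. -/
def StdTab (μ : YoungDiagram) (n : ℕ) : Type :=
  {pos : Fin n → ℕ × ℕ // IsStdTab μ pos}

/-- The content `c_t(m+1) = c − r` of the entry `m+1`, located in cell `(r, c)`
(and junk value `0` when `m ≥ n`). -/
def contN {n : ℕ} (pos : Fin n → ℕ × ℕ) (m : ℕ) : ℤ :=
  if h : m < n then ((pos ⟨m, h⟩).2 : ℤ) - ((pos ⟨m, h⟩).1 : ℤ) else 0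

/-- The axial distance `ρ_t(i+1) = c_t(i+1) − c_t(i+2)` (0-indexed `i`). -/
def rhoAx {n : ℕ} (pos : Fin n → ℕ × ℕ) (i : ℕ) (hi : i + 1 < n) : ℤ :=
  (((pos ⟨i, Nat.lt_of_succ_lt hi⟩).2 : ℤ) - ((pos ⟨i, Nat.lt_of_succ_lt hi⟩).1 : ℤ))
    - (((pos ⟨i + 1, hi⟩).2 : ℤ) - ((pos ⟨i + 1, hi⟩).1 : ℤ))

/-- The tableau `t·s_{i+1}`, obtained from `t` by swapping the entries `i+1`, `i+2`. -/
def swapEnt {n : ℕ} (pos : Fin n → ℕ × ℕ) (i : ℕ) (hi : i + 1 < n) : Fin n → ℕ × ℕ :=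
  pos ∘ (Equiv.swap ⟨i, Nat.lt_of_succ_lt hi⟩ ⟨i + 1, hi⟩)

/-- The conjugate of a tableau: the entry in cell `(r,c)` moves to cell `(c,r)`. -/
def conjPos {n : ℕ} (pos : Fin n → ℕ × ℕ) : Fin n → ℕ × ℕ :=
  fun k => ((pos k).2, (pos k).1)

lemma isStdTab_conj {μ : YoungDiagram} {n : ℕ} {pos : Fin n → ℕ × ℕ}
    (h : IsStdTab μ pos) : IsStdTab μ.transpose (conjPos pos) := by
  obtain ⟨hinj, hmem, hord⟩ := h
  refine ⟨?_, ?_, ?_⟩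
  · intro a b hab
    apply hinj
    have h1 : ((pos a).2, (pos a).1) = ((pos b).2, (pos b).1) := hab
    have h2 := congrArg Prod.snd h1
    have h3 := congrArg Prod.fst h1
    simp only at h2 h3
    exact Prod.ext h2 h3
  · intro k
    rw [YoungDiagram.mem_transpose]
    exact hmem k
  · intro j k h1 h2 hne
    refine hord j k h2 h1 ?_
    intro hc
    exact hne (by rw [conjPos, conjPos, hc])

/-- The conjugate standard tableau `t' ∈ Std(μ')` of `t ∈ Std(μ)`. -/
def conjTab {μ : YoungDiagram} {n : ℕ} (t : StdTab μ n) : StdTab μ.transpose n :=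
  ⟨conjPos t.val, isStdTab_conj t.prop⟩

/-- The conjugate standard tableau, going from `Std(μ')` back to `Std(μ)`. -/
def backConjTab {μ : YoungDiagram} {n : ℕ} (s : StdTab μ.transpose n) : StdTab μ n :=
  ⟨conjPos s.val, by
    have h := isStdTab_conj s.prop
    rwa [YoungDiagram.transpose_transpose] at h⟩

/-- The linear map `τ : S(μ') → S(μ)` with `v_s ↦ v_{s'}`. -/
def crossTau (F : Type*) [Field F] (μ : YoungDiagram) (n : ℕ) :
    (StdTab μ.transpose n → F) →ₗ[F] (StdTab μ n → F) where
  toFun f := fun t => f (conjTab t)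
  map_add' _ _ := rfl
  map_smul' _ _ := rfl

/-- The linear map `τ : S(μ) → S(μ')` with `v_t ↦ v_{t'}`. -/
def fwdTau (F : Type*) [Field F] (μ : YoungDiagram) (n : ℕ) :
    (StdTab μ n → F) →ₗ[F] (StdTab μ.transpose n → F) where
  toFun f := fun s => f (backConjTab s)
  map_add' _ _ := rfl
  map_smul' _ _ := rfl

/-- For a self-conjugate shape, the conjugate tableau `t'` of `t`, as a standard
tableau of the same shape. -/
def selfConjTab {μ : YoungDiagram} (hself : μ.transpose = μ) {n : ℕ}
    (t : StdTab μ n) : StdTab μ n :=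
  ⟨conjPos t.val, by have h := isStdTab_conj t.prop; rwa [hself] at h⟩

/-- For a self-conjugate shape, the linear involution `τ` of `S(μ)` with `v_t ↦ v_{t'}`. -/
def selfTau {F : Type*} [Field F] {μ : YoungDiagram} (hself : μ.transpose = μ) (n : ℕ) :
    (StdTab μ n → F) →ₗ[F] (StdTab μ n → F) where
  toFun f := fun t => f (selfConjTab hself t)
  map_add' _ _ := rfl
  map_smul' _ _ := rfl

/-- `act` is the (right) seminormal representation of the Hecke algebra on the Specht
module `S(μ)`, with basis `{v_t}` indexed by the standard `μ`-tableaux, on which the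
generators act by `v_t T_i = (−1/[ρ_t(i)]) v_t + α_t(i) v_{t·s_i}`. -/
def SpechtRep {F : Type*} [Field F] (q sqm1 : F) (sq : ℕ → F) (n : ℕ)
    {H : Type*} [Ring H] [Algebra F H] (T : Equiv.Perm (Fin n) → H)
    (μ : YoungDiagram) (act : H →ₗ[F] Module.End F (StdTab μ n → F)) : Prop :=
  act 1 = 1 ∧ (∀ a b : H, act (a * b) = act b * act a) ∧
    ∀ (i : ℕ) (hi : i + 1 < n) (t : StdTab μ n),
      act (T (sTr n i)) (Pi.single t (1 : F) : StdTab μ n → F) =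
        (-(qint q (rhoAx t.val i hi))⁻¹) • (Pi.single t (1 : F) : StdTab μ n → F) +
          (if h : IsStdTab μ (swapEnt t.val i hi) then
            alph q sqm1 sq (rhoAx t.val i hi) •
              (Pi.single (⟨swapEnt t.val i hi, h⟩ : StdTab μ n) (1 : F) : StdTab μ n → F)
           else 0)

section QintLemmas

variable {F : Type*} [Field F] (q : F)

lemma qint_nat (k : ℕ) : qint q (k : ℤ) = ∑ j ∈ Finset.range k, q ^ (2 * j + 1) := rfl

lemma qint_mul_sub (k : ℕ) : (q ^ 2 - 1) * qint q (k : ℤ) = (q ^ (2 * k) - 1) * q := by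
  induction k with
  | zero => rw [qint_nat]; simp
  | succ m ih =>
    rw [qint_nat] at ih ⊢
    rw [Finset.sum_range_succ, mul_add, ih]
    ring

lemma qint_neg (hq : q ≠ 0) (k : ℕ) (hk : 1 ≤ k) :
    qint q (-(k : ℤ)) = -(q ^ (2 * k))⁻¹ * qint q (k : ℤ) := by
  obtain ⟨m, rfl⟩ := Nat.exists_eq_succ_of_ne_zero (Nat.one_le_iff_ne_zero.mp hk)
  have h1 : (-(((m + 1 : ℕ)) : ℤ)) = Int.negSucc m := by
    rw [Int.negSucc_eq]; push_cast; ring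
  rw [h1, qint_nat]
  show -∑ j ∈ Finset.range (m + 1), (q ^ (2 * j + 1))⁻¹ = _
  rw [neg_mul, neg_inj, Finset.mul_sum, ← Finset.sum_range_reflect]
  apply Finset.sum_congr rfl
  intro j hj
  simp only [Finset.mem_range] at hj
  obtain ⟨d, rfl⟩ : ∃ d, m = j + d := ⟨m - j, by omega⟩
  simp only [show j + d + 1 - 1 - j = d from by omega]
  have h4 : q ^ (2 * d + 1) ≠ 0 := pow_ne_zero _ hq
  have h5 : q ^ (2 * (j + d + 1)) ≠ 0 := pow_ne_zero _ hq
  field_simp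
  rw [← pow_add]; congr 1; omega

lemma qint_neg_ne (hq : q ≠ 0) (k : ℕ) (hk : 1 ≤ k) (h : qint q (k : ℤ) ≠ 0) :
    qint q (-(k : ℤ)) ≠ 0 := by
  rw [qint_neg q hq k hk]
  simp [h, pow_ne_zero _ hq]

/-- The key identity `−1/[−k] = 1/[k] + (q − q⁻¹)` for `k ≠ 0`. -/
lemma qint_inv_identity (hq : q ≠ 0) (k : ℤ) (hk : k ≠ 0)
    (h : qint q ((k.natAbs : ℕ) : ℤ) ≠ 0) :
    -(qint q (-k))⁻¹ = (qint q k)⁻¹ + (q - q⁻¹) := by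
  have key : ∀ m : ℕ, 1 ≤ m → qint q (m : ℤ) ≠ 0 →
      -(qint q (-(m : ℤ)))⁻¹ = (qint q (m : ℤ))⁻¹ + (q - q⁻¹) := by
    intro m hm hne
    have e1 := qint_mul_sub q m
    have h5 : q ^ (2 * m) ≠ 0 := pow_ne_zero _ hq
    rw [qint_neg q hq m hm, neg_mul, inv_neg, neg_neg, mul_inv, inv_inv]
    field_simp
    linear_combination (-1 : F) * e1
  rcases lt_or_gt_of_ne hk with hneg | hpos
  · have hm : 1 ≤ k.natAbs := by omega
    have habs : ((k.natAbs : ℤ)) = -k := by omega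
    have h2 := key k.natAbs hm h
    rw [habs, neg_neg] at h2
    linear_combination h2
  · have habs : ((k.natAbs : ℤ)) = k := by omega
    have h2 := key k.natAbs (by omega) h
    rw [habs] at h2
    exact h2

/-- `α` is an odd function. -/
lemma alph_neg (sqm1 : F) (sq : ℕ → F) (hsq0 : sq 0 = 0) (m : ℤ) :
    alph q sqm1 sq (-m) = -alph q sqm1 sq m := by
  rcases lt_trichotomy m 0 with hm | rfl | hm
  · simp only [alph, if_pos (show (0:ℤ) ≤ -m by omega),
      if_neg (show ¬ (0:ℤ) ≤ m by omega), neg_neg]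
  · show alph q sqm1 sq 0 = _
    rw [alph, if_pos le_rfl]
    norm_num [hsq0]
  · simp only [alph, if_neg (show ¬ (0:ℤ) ≤ -m by omega),
      if_pos (show (0:ℤ) ≤ m by omega), neg_neg]

end QintLemmas
section TabLemmas

variable {μ : YoungDiagram} {n : ℕ}

noncomputable instance stdTabFintype (μ : YoungDiagram) (n : ℕ) : Fintype (StdTab μ n) := by
  apply Fintype.ofInjective
    (f := fun t : StdTab μ n => (fun k => (⟨t.val k, (μ.mem_cells _).mpr (t.prop.2.1 k)⟩ :
      {c // c ∈ μ.cells})))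
  intro a b hab
  apply Subtype.ext
  funext k
  have := congrFun hab k
  exact congrArg Subtype.val this

lemma conjPos_conjPos (pos : Fin n → ℕ × ℕ) : conjPos (conjPos pos) = pos := rfl

lemma selfConjTab_selfConjTab (hself : μ.transpose = μ) (t : StdTab μ n) :
    selfConjTab hself (selfConjTab hself t) = t := Subtype.ext rfl

lemma swapEnt_conjPos (pos : Fin n → ℕ × ℕ) (i : ℕ) (hi : i + 1 < n) :
    swapEnt (conjPos pos) i hi = conjPos (swapEnt pos i hi) := rfl

lemma rhoAx_conjPos (pos : Fin n → ℕ × ℕ) (i : ℕ) (hi : i + 1 < n) :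
    rhoAx (conjPos pos) i hi = -rhoAx pos i hi := by
  simp only [rhoAx, conjPos]; ring

lemma isStdTab_conj_iff (hself : μ.transpose = μ) (pos : Fin n → ℕ × ℕ) :
    IsStdTab μ (conjPos pos) ↔ IsStdTab μ pos := by
  constructor
  · intro h
    have h2 := isStdTab_conj h
    rwa [hself, conjPos_conjPos] at h2
  · intro h
    have h2 := isStdTab_conj h
    rwa [hself] at h2

lemma stdtab_lt {t : StdTab μ n} {j k : Fin n} (hle1 : (t.val j).1 ≤ (t.val k).1)
    (hle2 : (t.val j).2 ≤ (t.val k).2) (hne : t.val j ≠ t.val k) : j < k :=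
  t.prop.2.2 j k hle1 hle2 hne

lemma stdtab_exists (hμ : μ.card = n) (t : StdTab μ n) {c : ℕ × ℕ} (hc : c ∈ μ) :
    ∃ k, t.val k = c := by
  set f : Fin n → {c // c ∈ μ.cells} :=
    fun k => ⟨t.val k, (μ.mem_cells _).mpr (t.prop.2.1 k)⟩ with hf
  have hinj : Function.Injective f := by
    intro a b hab
    exact t.prop.1 (congrArg Subtype.val hab)
  have hcard : Fintype.card (Fin n) = Fintype.card {c // c ∈ μ.cells} := by
    rw [Fintype.card_fin, Fintype.card_coe, ← YoungDiagram.card, hμ]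
  have hsurj : Function.Surjective f :=
    (Fintype.bijective_iff_injective_and_card f).mpr ⟨hinj, hcard⟩ |>.2
  obtain ⟨k, hk⟩ := hsurj ⟨c, (μ.mem_cells _).mpr hc⟩
  exact ⟨k, congrArg Subtype.val hk⟩

lemma stdtab_pos_zero (hμ : μ.card = n) (hn : 1 ≤ n) (t : StdTab μ n) :
    t.val ⟨0, by omega⟩ = (0, 0) := by
  have h00 : (0, 0) ∈ μ := by
    have : μ.cells.Nonempty := by
      rw [← Finset.card_pos, ← YoungDiagram.card, hμ]; omega
    obtain ⟨c, hc⟩ := this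
    exact μ.up_left_mem (Nat.zero_le _) (Nat.zero_le _) ((μ.mem_cells _).mp hc)
  obtain ⟨k, hk⟩ := stdtab_exists hμ t h00
  suffices hk0 : k = ⟨0, by omega⟩ by rw [← hk0]; exact hk
  by_contra hne
  have : k < ⟨0, by omega⟩ := by
    apply stdtab_lt (t := t) (k := ⟨0, by omega⟩)
    · rw [hk]; exact Nat.zero_le _
    · rw [hk]; exact Nat.zero_le _
    · rw [hk]
      intro hc
      exact hne (t.prop.1 (hk.trans hc).symm).symm
  exact absurd this (by simp [Fin.lt_def])

lemma stdtab_pos_one (hμ : μ.card = n) (hn : 2 ≤ n) (t : StdTab μ n) :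
    t.val ⟨1, by omega⟩ = (0, 1) ∨ t.val ⟨1, by omega⟩ = (1, 0) := by
  have h0 := stdtab_pos_zero hμ (by omega) t
  obtain ⟨r, c, hb⟩ : ∃ r c, t.val ⟨1, by omega⟩ = (r, c) := ⟨_, _, rfl⟩
  have hbμ : ((r : ℕ), (c : ℕ)) ∈ μ := hb ▸ t.prop.2.1 _
  have hbne : ¬(r = 0 ∧ c = 0) := by
    intro ⟨h1, h2⟩
    subst h1; subst h2
    rw [← h0] at hb
    have := t.prop.1 hb
    simp [Fin.ext_iff] at this
  rcases Nat.eq_zero_or_pos r with hr | hr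
  · subst hr
    left
    rw [hb]
    have hc1 : 1 ≤ c := by omega
    have h01 : ((0 : ℕ), (1 : ℕ)) ∈ μ := μ.up_left_mem le_rfl hc1 hbμ
    obtain ⟨j, hj⟩ := stdtab_exists hμ t h01
    by_contra hcne
    have hc2 : 2 ≤ c := by
      rcases Nat.lt_or_ge c 2 with h | h
      · exfalso
        have : c = 1 := by omega
        subst this
        exact hcne rfl
      · exact h
    have hj1 : j < ⟨1, by omega⟩ :=
      stdtab_lt (t := t) (by rw [hj, hb]) (by rw [hj, hb]; exact hc1)
        (by rw [hj, hb]; simp only [ne_eq, Prod.mk.injEq, not_and]; omega)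
    have hj0 : (⟨0, by omega⟩ : Fin n) < j :=
      stdtab_lt (t := t) (by rw [hj, h0])
        (by rw [hj, h0]; exact Nat.zero_le _)
        (by rw [hj, h0]; simp only [ne_eq, Prod.mk.injEq, not_and]; omega)
    simp only [Fin.lt_def] at hj1 hj0
    omega
  · right
    rw [hb]
    have h10 : ((1 : ℕ), (0 : ℕ)) ∈ μ := μ.up_left_mem hr (Nat.zero_le _) hbμ
    obtain ⟨j, hj⟩ := stdtab_exists hμ t h10
    by_contra hcne
    have hcc : ¬(r = 1 ∧ c = 0) := by
      intro ⟨h1, h2⟩; subst h1; subst h2; exact hcne rfl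
    have hj1 : j < ⟨1, by omega⟩ :=
      stdtab_lt (t := t) (by rw [hj, hb]; exact hr) (by rw [hj, hb]; exact Nat.zero_le _)
        (by rw [hj, hb]; simp only [ne_eq, Prod.mk.injEq, not_and]; omega)
    have hj0 : (⟨0, by omega⟩ : Fin n) < j :=
      stdtab_lt (t := t) (by rw [hj, h0]; exact Nat.zero_le _)
        (by rw [hj, h0])
        (by rw [hj, h0]; simp only [ne_eq, Prod.mk.injEq, not_and]; omega)
    simp only [Fin.lt_def] at hj1 hj0
    omega

lemma rho_ne_zero (hμ : μ.card = n) (t : StdTab μ n) (i : ℕ) (hi : i + 1 < n) :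
    rhoAx t.val i hi ≠ 0 := by
  intro heq
  obtain ⟨r1, c1, e1⟩ : ∃ r c, t.val ⟨i, Nat.lt_of_succ_lt hi⟩ = (r, c) := ⟨_, _, rfl⟩
  obtain ⟨r2, c2, e2⟩ : ∃ r c, t.val ⟨i + 1, hi⟩ = (r, c) := ⟨_, _, rfl⟩
  have haμ : ((r1 : ℕ), (c1 : ℕ)) ∈ μ := e1 ▸ t.prop.2.1 _
  have hbμ : ((r2 : ℕ), (c2 : ℕ)) ∈ μ := e2 ▸ t.prop.2.1 _
  have hab : ¬(r1 = r2 ∧ c1 = c2) := by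
    intro ⟨h1, h2⟩
    subst h1; subst h2
    rw [← e2] at e1
    have := t.prop.1 e1
    simp [Fin.ext_iff] at this
  simp only [rhoAx, e1, e2] at heq
  rcases Nat.lt_trichotomy r1 r2 with h1 | h1 | h1
  · have h2 : c1 < c2 := by omega
    have hm : ((r1 : ℕ), c1 + 1) ∈ μ := μ.up_left_mem (by omega) (by omega) hbμ
    obtain ⟨j, hjv⟩ := stdtab_exists hμ t hm
    have hlt1 : (⟨i, Nat.lt_of_succ_lt hi⟩ : Fin n) < j :=
      stdtab_lt (t := t) (by rw [hjv, e1]) (by rw [hjv, e1]; omega)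
        (by rw [hjv, e1]; simp only [ne_eq, Prod.mk.injEq, not_and]; omega)
    have hlt2 : j < ⟨i + 1, hi⟩ :=
      stdtab_lt (t := t) (by rw [hjv, e2]; omega) (by rw [hjv, e2]; omega)
        (by rw [hjv, e2]; simp only [ne_eq, Prod.mk.injEq, not_and]; omega)
    simp only [Fin.lt_def] at hlt1 hlt2
    omega
  · exact hab ⟨h1, by omega⟩
  · have h2 : c2 < c1 := by omega
    have hm : ((r2 : ℕ), c2 + 1) ∈ μ := μ.up_left_mem (by omega) (by omega) haμ
    obtain ⟨j, hjv⟩ := stdtab_exists hμ t hm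
    have hlt1 : (⟨i + 1, hi⟩ : Fin n) < j :=
      stdtab_lt (t := t) (by rw [hjv, e2]) (by rw [hjv, e2]; omega)
        (by rw [hjv, e2]; simp only [ne_eq, Prod.mk.injEq, not_and]; omega)
    have hlt2 : j < ⟨i, Nat.lt_of_succ_lt hi⟩ :=
      stdtab_lt (t := t) (by rw [hjv, e1]; omega) (by rw [hjv, e1]; omega)
        (by rw [hjv, e1]; simp only [ne_eq, Prod.mk.injEq, not_and]; omega)
    simp only [Fin.lt_def] at hlt1 hlt2
    omega

lemma selfconj_rowLen (hμ : μ.card = n) (hself : μ.transpose = μ) :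
    2 * μ.rowLen 0 ≤ n + 1 := by
  rcases Nat.eq_zero_or_pos (μ.rowLen 0) with h0 | h0
  · omega
  have hcol : μ.colLen 0 = μ.rowLen 0 := by
    conv_rhs => rw [← hself]
    rw [YoungDiagram.rowLen_transpose]
  have hA : (μ.row 0).card = μ.rowLen 0 := (μ.rowLen_eq_card).symm
  have hB : (μ.col 0).card = μ.rowLen 0 := by rw [← μ.colLen_eq_card, hcol]
  have hsub : μ.row 0 ∪ μ.col 0 ⊆ μ.cells := by
    intro x hx
    rw [Finset.mem_union] at hx
    rcases hx with hx | hx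
    · exact (μ.mem_cells _).mpr (YoungDiagram.mem_row_iff.mp hx).1
    · exact (μ.mem_cells _).mpr (YoungDiagram.mem_col_iff.mp hx).1
  have hinter : (μ.row 0 ∩ μ.col 0).card ≤ 1 := by
    apply Finset.card_le_one.mpr
    intro x hx y hy
    rw [Finset.mem_inter] at hx hy
    have hx1 := (YoungDiagram.mem_row_iff.mp hx.1).2
    have hx2 := (YoungDiagram.mem_col_iff.mp hx.2).2
    have hy1 := (YoungDiagram.mem_row_iff.mp hy.1).2
    have hy2 := (YoungDiagram.mem_col_iff.mp hy.2).2
    exact Prod.ext (hx1.trans hy1.symm) (hx2.trans hy2.symm)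
  have hcup : (μ.row 0 ∪ μ.col 0).card ≤ n := by
    calc (μ.row 0 ∪ μ.col 0).card ≤ μ.cells.card := Finset.card_le_card hsub
    _ = n := by rw [← YoungDiagram.card, hμ]
  have := Finset.card_union_add_card_inter (μ.row 0) (μ.col 0)
  omega

lemma mem_content_bound {r c : ℕ} (h : (r, c) ∈ μ) :
    r < μ.colLen 0 ∧ c < μ.rowLen 0 := by
  constructor
  · rw [← YoungDiagram.mem_iff_lt_colLen]
    exact μ.up_left_mem le_rfl (Nat.zero_le _) h
  · rw [← YoungDiagram.mem_iff_lt_rowLen]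
    exact μ.up_left_mem (Nat.zero_le _) le_rfl h

lemma rho_natAbs_le (hμ : μ.card = n) (hself : μ.transpose = μ) (t : StdTab μ n)
    (i : ℕ) (hi : i + 1 < n) : (rhoAx t.val i hi).natAbs ≤ n := by
  have hcol : μ.colLen 0 = μ.rowLen 0 := by
    conv_rhs => rw [← hself]
    rw [YoungDiagram.rowLen_transpose]
  have h2m := selfconj_rowLen hμ hself
  obtain ⟨r1, c1, e1⟩ : ∃ r c, t.val ⟨i, Nat.lt_of_succ_lt hi⟩ = (r, c) := ⟨_, _, rfl⟩
  obtain ⟨r2, c2, e2⟩ : ∃ r c, t.val ⟨i + 1, hi⟩ = (r, c) := ⟨_, _, rfl⟩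
  have b1 := mem_content_bound (e1 ▸ t.prop.2.1 ⟨i, Nat.lt_of_succ_lt hi⟩)
  have b2 := mem_content_bound (e2 ▸ t.prop.2.1 ⟨i + 1, hi⟩)
  rw [hcol] at b1 b2
  simp only [rhoAx, e1, e2]
  omega

end TabLemmas
section TauLen

variable {F : Type*} [Field F] {μ : YoungDiagram} {n : ℕ}

lemma selfTau_single (hself : μ.transpose = μ) (t : StdTab μ n) :
    (selfTau hself n : (StdTab μ n → F) →ₗ[F] (StdTab μ n → F)) (Pi.single t (1 : F)) =
      Pi.single (selfConjTab hself t) (1 : F) := by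
  funext s
  show (Pi.single t (1:F) : StdTab μ n → F) (selfConjTab hself s) =
    (Pi.single (selfConjTab hself t) (1:F) : StdTab μ n → F) s
  rw [Pi.single_apply, Pi.single_apply]
  congr 1
  apply propext
  constructor
  · intro h
    rw [← h, selfConjTab_selfConjTab]
  · intro h
    rw [h, selfConjTab_selfConjTab]

lemma selfTau_selfTau (hself : μ.transpose = μ) :
    (selfTau hself n : (StdTab μ n → F) →ₗ[F] (StdTab μ n → F)) ∘ₗ selfTau hself n =
      LinearMap.id := by
  apply LinearMap.ext
  intro f
  funext t
  show f (selfConjTab hself (selfConjTab hself t)) = f t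
  rw [selfConjTab_selfConjTab]

lemma exists_word (n : ℕ) (w : Equiv.Perm (Fin n)) :
    ∃ l : List ℕ, (∀ i ∈ l, i + 1 < n) ∧ w = (l.map (sTr n)).prod := by
  match n with
  | 0 =>
    refine ⟨[], by simp, ?_⟩
    apply Equiv.ext; intro x; exact absurd x.2 (by omega)
  | 1 =>
    refine ⟨[], by simp, ?_⟩
    apply Equiv.ext; intro x
    have : ∀ y : Fin 1, y = 0 := fun y => Fin.ext (by omega)
    rw [this (w x), this x]
    simp
  | (m + 2) =>
    have htop := Equiv.Perm.mclosure_swap_castSucc_succ (m + 1)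
    have hw : w ∈ Submonoid.closure
        (Set.range fun i : Fin (m + 1) ↦ Equiv.swap i.castSucc i.succ) := by
      rw [htop]; trivial
    induction hw using Submonoid.closure_induction with
    | mem x hx =>
      obtain ⟨i, rfl⟩ := hx
      refine ⟨[i.val], by
        intro j hj
        simp only [List.mem_singleton] at hj
        subst hj
        have := i.isLt
        omega, ?_⟩
      simp only [List.map_cons, List.map_nil, List.prod_cons, List.prod_nil, mul_one]
      rw [sTr, dif_pos (by omega)]
      congr 1 <;> apply Fin.ext <;> simp
    | one => exact ⟨[], by simp, by simp⟩
    | mul x y _ _ ihx ihy =>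
      obtain ⟨lx, hlx1, hlx2⟩ := ihx
      obtain ⟨ly, hly1, hly2⟩ := ihy
      refine ⟨lx ++ ly, ?_, ?_⟩
      · intro i hi
        rcases List.mem_append.mp hi with h | h
        · exact hlx1 i h
        · exact hly1 i h
      · rw [List.map_append, List.prod_append, hlx2, hly2]

lemma len_mem (n : ℕ) (w : Equiv.Perm (Fin n)) :
    ∃ l : List ℕ, l.length = len n w ∧ (∀ i ∈ l, i + 1 < n) ∧
      w = (l.map (sTr n)).prod := by
  have hne : {k | ∃ l : List ℕ, l.length = k ∧ (∀ i ∈ l, i + 1 < n) ∧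
      w = (l.map (sTr n)).prod}.Nonempty := by
    obtain ⟨l, h1, h2⟩ := exists_word n w
    exact ⟨l.length, l, rfl, h1, h2⟩
  exact Nat.sInf_mem hne

lemma len_le (n : ℕ) (w : Equiv.Perm (Fin n)) (l : List ℕ) (h1 : ∀ i ∈ l, i + 1 < n)
    (h2 : w = (l.map (sTr n)).prod) : len n w ≤ l.length :=
  Nat.sInf_le ⟨l, rfl, h1, h2⟩

lemma len_one (n : ℕ) : len n (1 : Equiv.Perm (Fin n)) = 0 :=
  Nat.le_zero.mp (len_le n 1 [] (by simp) (by simp))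

lemma eq_one_of_len_eq_zero {n : ℕ} {w : Equiv.Perm (Fin n)} (h : len n w = 0) : w = 1 := by
  obtain ⟨l, hl, _, hprod⟩ := len_mem n w
  rw [h, List.length_eq_zero_iff] at hl
  subst hl
  simpa using hprod

lemma sTr_ne_one {n i : ℕ} (hi : i + 1 < n) : sTr n i ≠ 1 := by
  rw [sTr, dif_pos hi]
  rw [Ne, Equiv.swap_eq_one_iff]
  intro h
  have := congrArg Fin.val h
  simp at this

lemma len_sTr {n i : ℕ} (hi : i + 1 < n) : len n (sTr n i) = 1 := by
  have hle : len n (sTr n i) ≤ 1 := by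
    have := len_le n (sTr n i) [i] (by simpa using hi) (by simp)
    simpa using this
  have hne : len n (sTr n i) ≠ 0 := fun h => sTr_ne_one hi (eq_one_of_len_eq_zero h)
  omega

lemma sTr_mul_self {n i : ℕ} (hi : i + 1 < n) : sTr n i * sTr n i = 1 := by
  rw [sTr, dif_pos hi, Equiv.swap_mul_self]

lemma sTr_inv {n i : ℕ} (hi : i + 1 < n) : (sTr n i)⁻¹ = sTr n i := by
  rw [sTr, dif_pos hi, Equiv.swap_inv]

lemma len_mul_le (n : ℕ) (w : Equiv.Perm (Fin n)) (i : ℕ) (hi : i + 1 < n) :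
    len n (w * sTr n i) ≤ len n w + 1 := by
  obtain ⟨l, hl, h1, h2⟩ := len_mem n w
  have := len_le n (w * sTr n i) (l ++ [i]) ?_ ?_
  · simpa [hl] using this
  · intro j hj
    rcases List.mem_append.mp hj with h | h
    · exact h1 j h
    · simp at h; omega
  · rw [List.map_append, List.prod_append, ← h2]
    simp

end TauLen
section GenConj

lemma basisFun_eq_single {F : Type*} [Field F] {ι : Type*} [Fintype ι] [DecidableEq ι]
    (t : ι) : (Pi.basisFun F ι) t = Pi.single t (1 : F) := by
  simp [Pi.basisFun_apply, Pi.single]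

lemma act_gen_conj {F : Type*} [Field F] (q : F) (hq0 : q ≠ 0) {n : ℕ}
    (hqint : ∀ k : ℕ, 1 ≤ k → k ≤ n → qint q (k : ℤ) ≠ 0)
    (sqm1 : F) (sq : ℕ → F) (hsq0 : sq 0 = 0)
    {H : Type*} [Ring H] [Algebra F H] (T : Equiv.Perm (Fin n) → H)
    {μ : YoungDiagram} (hμ : μ.card = n) (hself : μ.transpose = μ)
    (act : H →ₗ[F] Module.End F (StdTab μ n → F))
    (hact : SpechtRep q sqm1 sq n T μ act) (i : ℕ) (hi : i + 1 < n) :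
    (selfTau hself n) ∘ₗ (act (T (sTr n i)) : (StdTab μ n → F) →ₗ[F] (StdTab μ n → F))
        ∘ₗ (selfTau hself n) =
      (q - q⁻¹) • (LinearMap.id : (StdTab μ n → F) →ₗ[F] (StdTab μ n → F))
        - act (T (sTr n i)) := by
  apply (Pi.basisFun F (StdTab μ n)).ext
  intro t
  rw [basisFun_eq_single]
  simp only [LinearMap.comp_apply, LinearMap.sub_apply, LinearMap.smul_apply,
    LinearMap.id_apply]
  rw [selfTau_single]
  set t' := selfConjTab hself t with ht'
  rw [hact.2.2 i hi t']
  rw [map_add, map_smul, selfTau_single, selfConjTab_selfConjTab]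
  have hrho : rhoAx t'.val i hi = -rhoAx t.val i hi := rhoAx_conjPos t.val i hi
  have hne : rhoAx t.val i hi ≠ 0 := rho_ne_zero hμ t i hi
  have hq1 : qint q (((rhoAx t.val i hi).natAbs : ℕ) : ℤ) ≠ 0 :=
    hqint _ (by omega) (rho_natAbs_le hμ hself t i hi)
  have key := qint_inv_identity q hq0 _ hne hq1
  rw [hact.2.2 i hi t]
  by_cases hC : IsStdTab μ (swapEnt t.val i hi)
  · have hC' : IsStdTab μ (swapEnt t'.val i hi) := by
      show IsStdTab μ (swapEnt (conjPos t.val) i hi)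
      rw [swapEnt_conjPos]
      exact (isStdTab_conj_iff hself _).mpr hC
    rw [dif_pos hC', dif_pos hC]
    rw [map_smul, selfTau_single (F := F) (n := n) hself (⟨swapEnt t'.val i hi, hC'⟩ : StdTab μ n)]
    have hsub : selfConjTab hself ⟨swapEnt t'.val i hi, hC'⟩ =
        (⟨swapEnt t.val i hi, hC⟩ : StdTab μ n) := by
      apply Subtype.ext
      show conjPos (swapEnt (conjPos t.val) i hi) = swapEnt t.val i hi
      rw [swapEnt_conjPos, conjPos_conjPos]
    rw [hsub, hrho, alph_neg q sqm1 sq hsq0, key]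
    module
  · have hC' : ¬ IsStdTab μ (swapEnt t'.val i hi) := by
      show ¬ IsStdTab μ (swapEnt (conjPos t.val) i hi)
      rw [swapEnt_conjPos]
      exact fun h => hC ((isStdTab_conj_iff hself _).mp h)
    rw [dif_neg hC', dif_neg hC]
    rw [map_zero, hrho, key]
    module

end GenConj
section HashConj

variable {F : Type*} [Field F] {n : ℕ} {H : Type*} [Ring H] [Algebra F H]

lemma T_sTr_inverse (q : F) (T : Equiv.Perm (Fin n) → H)
    (hT1 : T 1 = 1) (hTunit : ∀ w, IsUnit (T w))
    (hmul2 : ∀ (w : Equiv.Perm (Fin n)) (i : ℕ), i + 1 < n →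
      len n (w * sTr n i) + 1 = len n w →
      T w * T (sTr n i) = T (w * sTr n i) + (q - q⁻¹) • T w)
    (i : ℕ) (hi : i + 1 < n) :
    Ring.inverse (T (sTr n i)) = T (sTr n i) - (q - q⁻¹) • (1 : H) := by
  have hTT : T (sTr n i) * T (sTr n i) = 1 + (q - q⁻¹) • T (sTr n i) := by
    have := hmul2 (sTr n i) i hi (by rw [sTr_mul_self hi, len_one, len_sTr hi])
    rwa [sTr_mul_self hi, hT1] at this
  have hright : T (sTr n i) * (T (sTr n i) - (q - q⁻¹) • (1 : H)) = 1 := by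
    rw [mul_sub, hTT, mul_smul_comm, mul_one, add_sub_cancel_right]
  calc Ring.inverse (T (sTr n i))
      = Ring.inverse (T (sTr n i)) * (T (sTr n i) * (T (sTr n i) - (q - q⁻¹) • (1 : H))) := by
        rw [hright, mul_one]
    _ = (Ring.inverse (T (sTr n i)) * T (sTr n i)) * (T (sTr n i) - (q - q⁻¹) • (1 : H)) := by
        rw [mul_assoc]
    _ = T (sTr n i) - (q - q⁻¹) • (1 : H) := by
        rw [Ring.inverse_mul_cancel _ (hTunit _), one_mul]

lemma act_hash_conj (q : F) (hq0 : q ≠ 0)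
    (hqint : ∀ k : ℕ, 1 ≤ k → k ≤ n → qint q (k : ℤ) ≠ 0)
    (sqm1 : F) (sq : ℕ → F) (hsq0 : sq 0 = 0)
    (T : Equiv.Perm (Fin n) → H)
    (hT1 : T 1 = 1) (hTunit : ∀ w, IsUnit (T w))
    (hmul1 : ∀ (w : Equiv.Perm (Fin n)) (i : ℕ), i + 1 < n →
      len n (w * sTr n i) = len n w + 1 → T w * T (sTr n i) = T (w * sTr n i))
    (hmul2 : ∀ (w : Equiv.Perm (Fin n)) (i : ℕ), i + 1 < n →
      len n (w * sTr n i) + 1 = len n w →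
      T w * T (sTr n i) = T (w * sTr n i) + (q - q⁻¹) • T w)
    (hash : H ≃ₐ[F] H)
    (hhash : ∀ w, hash (T w) = ((-1 : F) ^ len n w) • Ring.inverse (T w⁻¹))
    {μ : YoungDiagram} (hμ : μ.card = n) (hself : μ.transpose = μ)
    (act : H →ₗ[F] Module.End F (StdTab μ n → F))
    (hact : SpechtRep q sqm1 sq n T μ act) :
    ∀ w : Equiv.Perm (Fin n), act (hash (T w)) =
      (selfTau hself n : Module.End F (StdTab μ n → F)) * act (T w) * selfTau hself n := by
  set τ : Module.End F (StdTab μ n → F) := selfTau hself n with hτ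
  have hττ : τ * τ = 1 := by
    rw [Module.End.mul_eq_comp]
    show (selfTau hself n : (StdTab μ n → F) →ₗ[F] _) ∘ₗ selfTau hself n = 1
    rw [selfTau_selfTau]; rfl
  -- the generator case
  have hgen : ∀ (i : ℕ), i + 1 < n → act (hash (T (sTr n i))) = τ * act (T (sTr n i)) * τ := by
    intro i hi
    have h1 : hash (T (sTr n i)) = (q - q⁻¹) • (1 : H) - T (sTr n i) := by
      rw [hhash, sTr_inv hi, len_sTr hi, T_sTr_inverse q T hT1 hTunit hmul2 i hi]
      rw [pow_one, neg_one_smul, neg_sub]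
    have h2 : act ((q - q⁻¹) • (1 : H) - T (sTr n i)) =
        (q - q⁻¹) • (1 : Module.End F (StdTab μ n → F)) - act (T (sTr n i)) := by
      rw [map_sub, map_smul, hact.1]
    have h3 := act_gen_conj q hq0 hqint sqm1 sq hsq0 T hμ hself act hact i hi
    rw [h1, h2, show (1 : Module.End F (StdTab μ n → F)) = LinearMap.id from rfl, ← h3]
    rfl
  -- induction on a bound for the length
  suffices hind : ∀ (k : ℕ) (w : Equiv.Perm (Fin n)), len n w ≤ k →
      act (hash (T w)) = τ * act (T w) * τ by
    intro w; exact hind (len n w) w le_rfl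
  intro k
  induction k with
  | zero =>
    intro w hw
    have hw1 : w = 1 := eq_one_of_len_eq_zero (Nat.le_zero.mp hw)
    subst hw1
    rw [hT1, map_one, hact.1, mul_one, hττ]
  | succ m ih =>
    intro w hw
    rcases Nat.lt_or_ge (len n w) (m + 1) with h0 | h0
    · exact ih w (by omega)
    have hk : len n w = m + 1 := by omega
    obtain ⟨l, hl, hmem, hprod⟩ := len_mem n w
    rcases l.eq_nil_or_concat with rfl | ⟨L, i, rfl⟩
    · simp [hk] at hl
    rw [List.concat_eq_append] at hl hmem hprod
    have hi : i + 1 < n := hmem i (by simp)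
    have hmemL : ∀ j ∈ L, j + 1 < n := fun j hj => hmem j (by simp [hj])
    set w' : Equiv.Perm (Fin n) := (L.map (sTr n)).prod with hw'
    have hws : w = w' * sTr n i := by
      rw [hprod, List.map_append, List.prod_append]
      simp [hw']
    have hLlen : L.length = m := by
      simp at hl; omega
    have hlenw' : len n w' ≤ m := by
      have := len_le n w' L hmemL rfl
      omega
    have hlen1 : len n (w' * sTr n i) = len n w' + 1 := by
      have h1 : len n (w' * sTr n i) ≤ len n w' + 1 := len_mul_le n w' i hi
      rw [← hws] at h1 ⊢
      omega
    have hTmul : T w' * T (sTr n i) = T w := by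
      rw [hws]; exact hmul1 w' i hi hlen1
    have ihw' := ih w' hlenw'
    have hgeni := hgen i hi
    calc act (hash (T w)) = act (hash (T w') * hash (T (sTr n i))) := by
          rw [← map_mul, hTmul]
      _ = act (hash (T (sTr n i))) * act (hash (T w')) := hact.2.1 _ _
      _ = (τ * act (T (sTr n i)) * τ) * (τ * act (T w') * τ) := by rw [ihw', hgeni]
      _ = τ * (act (T (sTr n i)) * (τ * τ) * act (T w')) * τ := by noncomm_ring
      _ = τ * (act (T (sTr n i)) * act (T w')) * τ := by rw [hττ, mul_one]
      _ = τ * act (T w' * T (sTr n i)) * τ := by rw [hact.2.1]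
      _ = τ * act (T w) * τ := by rw [hTmul]

end HashConj
section Eigen

variable {F : Type*} [Field F] {μ : YoungDiagram} {n : ℕ}

lemma selfConjTab_val_fst (hself : μ.transpose = μ) (t : StdTab μ n) (k : Fin n) :
    ((selfConjTab hself t).val k).1 = (t.val k).2 := rfl

lemma conj_pos1_iff (hμ : μ.card = n) (hself : μ.transpose = μ) (hn : 2 ≤ n)
    (t : StdTab μ n) :
    (((selfConjTab hself t).val ⟨1, by omega⟩).1 = 0) ↔
      ¬ ((t.val ⟨1, by omega⟩).1 = 0) := by
  rw [selfConjTab_val_fst]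
  rcases stdtab_pos_one hμ hn t with h | h <;> rw [h] <;> simp

lemma conj_inj (hself : μ.transpose = μ) :
    Function.Injective (selfConjTab hself (n := n)) := by
  intro a b hab
  have := congrArg (selfConjTab hself) hab
  rwa [selfConjTab_selfConjTab, selfConjTab_selfConjTab] at this

lemma image_conj_filter (hμ : μ.card = n) (hself : μ.transpose = μ) (hn : 2 ≤ n) :
    Finset.image (selfConjTab hself)
        (Finset.univ.filter (fun t : StdTab μ n => (t.val ⟨1, by omega⟩).1 = 0)) =
      Finset.univ.filter (fun t : StdTab μ n => ¬ ((t.val ⟨1, by omega⟩).1 = 0)) := by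
  ext s
  simp only [Finset.mem_image, Finset.mem_filter, Finset.mem_univ, true_and]
  constructor
  · rintro ⟨t, ht, rfl⟩
    rw [conj_pos1_iff hμ hself hn]
    exact not_not_intro ht
  · intro hs
    refine ⟨selfConjTab hself s, ?_, selfConjTab_selfConjTab hself s⟩
    rw [conj_pos1_iff hμ hself hn]
    exact hs

lemma mem_span_plus (hμ : μ.card = n) (hself : μ.transpose = μ) (hn : 2 ≤ n)
    (x : StdTab μ n → F) (hx : (selfTau hself n : (StdTab μ n → F) →ₗ[F] _) x = x) :
    x ∈ Submodule.span F {y : StdTab μ n → F | ∃ t : StdTab μ n,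
        (t.val ⟨1, by omega⟩).1 = 0 ∧
        y = (Pi.single t (1 : F) : StdTab μ n → F)
              + (Pi.single (selfConjTab hself t) (1 : F) : StdTab μ n → F)} := by
  have hx' : ∀ t, x (selfConjTab hself t) = x t := fun t => congrFun hx t
  have hexp : x = ∑ t : StdTab μ n, Pi.single t (x t) := (Finset.univ_sum_single x).symm
  rw [hexp, ← Finset.sum_filter_add_sum_filter_not Finset.univ
    (fun t : StdTab μ n => (t.val ⟨1, by omega⟩).1 = 0)]
  rw [← image_conj_filter hμ hself hn,
    Finset.sum_image (fun a _ b _ h => conj_inj hself h), ← Finset.sum_add_distrib]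
  apply Submodule.sum_mem
  intro t ht
  simp only [Finset.mem_filter] at ht
  have h1 : (Pi.single t (x t) : StdTab μ n → F) = x t • (Pi.single t (1 : F) : StdTab μ n → F) := by
    rw [← Pi.single_smul, smul_eq_mul, mul_one]
  have h2 : (Pi.single (selfConjTab hself t) (x (selfConjTab hself t)) : StdTab μ n → F)
      = x t • (Pi.single (selfConjTab hself t) (1 : F) : StdTab μ n → F) := by
    rw [hx', ← Pi.single_smul, smul_eq_mul, mul_one]
  rw [h1, h2, ← smul_add]
  exact Submodule.smul_mem _ _ (Submodule.subset_span ⟨t, ht.2, rfl⟩)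

lemma mem_span_minus (hμ : μ.card = n) (hself : μ.transpose = μ) (hn : 2 ≤ n)
    (x : StdTab μ n → F) (hx : (selfTau hself n : (StdTab μ n → F) →ₗ[F] _) x = -x) :
    x ∈ Submodule.span F {y : StdTab μ n → F | ∃ t : StdTab μ n,
        (t.val ⟨1, by omega⟩).1 = 0 ∧
        y = (Pi.single t (1 : F) : StdTab μ n → F)
              - (Pi.single (selfConjTab hself t) (1 : F) : StdTab μ n → F)} := by
  have hx' : ∀ t, x (selfConjTab hself t) = -x t := by
    intro t
    have := congrFun hx t
    exact this
  have hexp : x = ∑ t : StdTab μ n, Pi.single t (x t) := (Finset.univ_sum_single x).symm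
  rw [hexp, ← Finset.sum_filter_add_sum_filter_not Finset.univ
    (fun t : StdTab μ n => (t.val ⟨1, by omega⟩).1 = 0)]
  rw [← image_conj_filter hμ hself hn,
    Finset.sum_image (fun a _ b _ h => conj_inj hself h), ← Finset.sum_add_distrib]
  apply Submodule.sum_mem
  intro t ht
  simp only [Finset.mem_filter] at ht
  have h1 : (Pi.single t (x t) : StdTab μ n → F) = x t • (Pi.single t (1 : F) : StdTab μ n → F) := by
    rw [← Pi.single_smul, smul_eq_mul, mul_one]
  have h2 : (Pi.single (selfConjTab hself t) (x (selfConjTab hself t)) : StdTab μ n → F)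
      = -(x t • (Pi.single (selfConjTab hself t) (1 : F) : StdTab μ n → F)) := by
    rw [hx', ← Pi.single_smul, smul_eq_mul, mul_one, Pi.single_neg]
  rw [h1, h2, ← smul_neg, ← smul_add]
  rw [← sub_eq_add_neg]
  exact Submodule.smul_mem _ _ (Submodule.subset_span ⟨t, ht.2, rfl⟩)

end Eigen

section TraceRestrict

lemma trace_restrict_eq_trace_comp {F V : Type*} [Field F] [AddCommGroup V] [Module F V]
    [FiniteDimensional F V] (W : Submodule F V) (g p : V →ₗ[F] V)
    (hfix : ∀ x ∈ W, p x = x) (hrange : ∀ x, p x ∈ W) (hg : ∀ x ∈ W, g x ∈ W) :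
    LinearMap.trace F W (g.restrict hg) = LinearMap.trace F V (p ∘ₗ g) := by
  have hpg : ∀ x, (p ∘ₗ g) x ∈ W := fun x => hrange _
  have hdecomp : p ∘ₗ g = W.subtype ∘ₗ (p ∘ₗ g).codRestrict W hpg :=
    (LinearMap.subtype_comp_codRestrict (f := p ∘ₗ g) W hpg).symm
  rw [hdecomp, LinearMap.trace_comp_comm']
  congr 1
  apply LinearMap.ext
  rintro ⟨x, hx⟩
  apply Subtype.ext
  show g x = p (g x)
  exact (hfix _ (hg x hx)).symm

end TraceRestrict

/-- Corollary `SplitCharacters`: for a self-conjugate `λ = λ'` and an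
even permutation `w ∈ 𝔄ₙ`, `χ^{λ±}_𝒜(A_w) = ½(χ^λ(T_w) ± χ^λ(T_w τ))`, where
`A_w = ½(T_w + T_w^#)`. -/
theorem split_characters_on_Aw
    {F : Type*} [Field F] (q : F) (hq0 : q ≠ 0) (hq1 : q ≠ 1) (n : ℕ)
    (hqint : ∀ k : ℕ, 1 ≤ k → k ≤ n → qint q (k : ℤ) ≠ 0)
    -- the chosen square roots √(−1) and √([k]) in F
    (sqm1 : F) (hsqm1 : sqm1 ^ 2 = -1)
    (sq : ℕ → F) (hsq0 : sq 0 = 0)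
    (hsq : ∀ k : ℕ, 1 ≤ k → k ≤ n → sq k ^ 2 = qint q (k : ℤ))
    {H : Type*} [Ring H] [Algebra F H]
    -- the Iwahori–Hecke algebra of type A with its basis of standard elements T_w
    (T : Equiv.Perm (Fin n) → H)
    (bT : Module.Basis (Equiv.Perm (Fin n)) F H) (hbT : ∀ w, bT w = T w)
    (hT1 : T 1 = 1)
    (hTunit : ∀ w, IsUnit (T w))
    (hmul1 : ∀ (w : Equiv.Perm (Fin n)) (i : ℕ), i + 1 < n →
      len n (w * sTr n i) = len n w + 1 → T w * T (sTr n i) = T (w * sTr n i))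
    (hmul2 : ∀ (w : Equiv.Perm (Fin n)) (i : ℕ), i + 1 < n →
      len n (w * sTr n i) + 1 = len n w →
      T w * T (sTr n i) = T (w * sTr n i) + (q - q⁻¹) • T w)
    -- the hash involution
    (hash : H ≃ₐ[F] H)
    (hhash : ∀ w, hash (T w) = ((-1 : F) ^ len n w) • Ring.inverse (T w⁻¹))
    -- the seminormal Specht module S(λ) for a self-conjugate λ
    (μ : YoungDiagram) (hμ : μ.card = n) (hself : μ.transpose = μ) (hn : 2 ≤ n)
    (act : H →ₗ[F] Module.End F (StdTab μ n → F))
    (hact : SpechtRep q sqm1 sq n T μ act)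
    (Sp Sm : Submodule F (StdTab μ n → F))
    (hSp : Sp = Submodule.span F {x : StdTab μ n → F | ∃ t : StdTab μ n,
        (t.val ⟨1, by omega⟩).1 = 0 ∧
        x = (Pi.single t (1 : F) : StdTab μ n → F)
              + (Pi.single (selfConjTab hself t) (1 : F) : StdTab μ n → F)})
    (hSm : Sm = Submodule.span F {x : StdTab μ n → F | ∃ t : StdTab μ n,
        (t.val ⟨1, by omega⟩).1 = 0 ∧
        x = (Pi.single t (1 : F) : StdTab μ n → F)
              - (Pi.single (selfConjTab hself t) (1 : F) : StdTab μ n → F)})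
    (w : Equiv.Perm (Fin n)) (hw : Even (len n w)) :
    (∀ x ∈ Sp, act ((2 : F)⁻¹ • (T w + hash (T w))) x ∈ Sp) ∧
    (∀ x ∈ Sm, act ((2 : F)⁻¹ • (T w + hash (T w))) x ∈ Sm) ∧
    (∀ hp : ∀ x ∈ Sp, act ((2 : F)⁻¹ • (T w + hash (T w))) x ∈ Sp,
      LinearMap.trace F Sp ((act ((2 : F)⁻¹ • (T w + hash (T w)))).restrict hp)
        = (2 : F)⁻¹ * (LinearMap.trace F (StdTab μ n → F) (act (T w))
            + LinearMap.trace F (StdTab μ n → F) ((selfTau hself n) ∘ₗ (act (T w))))) ∧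
    (∀ hm : ∀ x ∈ Sm, act ((2 : F)⁻¹ • (T w + hash (T w))) x ∈ Sm,
      LinearMap.trace F Sm ((act ((2 : F)⁻¹ • (T w + hash (T w)))).restrict hm)
        = (2 : F)⁻¹ * (LinearMap.trace F (StdTab μ n → F) (act (T w))
            - LinearMap.trace F (StdTab μ n → F) ((selfTau hself n) ∘ₗ (act (T w))))) := by

  classical
  have hτE := act_hash_conj q hq0 hqint sqm1 sq hsq0 T hT1 hTunit hmul1 hmul2 hash hhash
    hμ hself act hact w
  set τ : Module.End F (StdTab μ n → F) := selfTau hself n with hτdef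
  set f : Module.End F (StdTab μ n → F) := act (T w) with hfdef
  have hττ : τ * τ = 1 := by
    rw [hτdef, Module.End.mul_eq_comp]
    show (selfTau hself n : (StdTab μ n → F) →ₗ[F] _) ∘ₗ selfTau hself n = 1
    rw [selfTau_selfTau]; rfl
  have hττx : ∀ x : StdTab μ n → F, τ (τ x) = x := by
    intro x
    have h := LinearMap.ext_iff.mp hττ x
    simpa using h
  have hA : act ((2 : F)⁻¹ • (T w + hash (T w))) = (2 : F)⁻¹ • (f + τ * f * τ) := by
    rw [map_smul, map_add, hτE]
  have hSp_fix : ∀ x ∈ Sp, τ x = x := by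
    intro x hx
    rw [hSp] at hx
    induction hx using Submodule.span_induction with
    | mem y hy =>
      obtain ⟨t, ht, rfl⟩ := hy
      rw [hτdef]
      show (selfTau hself n : (StdTab μ n → F) →ₗ[F] _) _ = _
      rw [map_add, selfTau_single, selfTau_single, selfConjTab_selfConjTab]
      exact add_comm _ _
    | zero => simp
    | add a b _ _ iha ihb => rw [map_add, iha, ihb]
    | smul c a _ iha => rw [map_smul, iha]
  have hSm_fix : ∀ x ∈ Sm, τ x = -x := by
    intro x hx
    rw [hSm] at hx
    induction hx using Submodule.span_induction with
    | mem y hy =>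
      obtain ⟨t, ht, rfl⟩ := hy
      rw [hτdef]
      show (selfTau hself n : (StdTab μ n → F) →ₗ[F] _) _ = _
      rw [map_sub, selfTau_single, selfTau_single, selfConjTab_selfConjTab, neg_sub]
    | zero => simp
    | add a b _ _ iha ihb => rw [map_add, iha, ihb, neg_add]
    | smul c a _ iha => rw [map_smul, iha, smul_neg]
  have hSp_mem : ∀ x : StdTab μ n → F, τ x = x → x ∈ Sp := by
    intro x hx
    rw [hSp]
    exact mem_span_plus hμ hself hn x hx
  have hSm_mem : ∀ x : StdTab μ n → F, τ x = -x → x ∈ Sm := by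
    intro x hx
    rw [hSm]
    exact mem_span_minus hμ hself hn x hx
  have hgoalp : ∀ x ∈ Sp, act ((2 : F)⁻¹ • (T w + hash (T w))) x ∈ Sp := by
    intro x hx
    apply hSp_mem
    rw [hA]
    have hx' := hSp_fix x hx
    simp only [LinearMap.smul_apply, LinearMap.add_apply, Module.End.mul_apply]
    rw [hx', map_smul, map_add, hττx]
    rw [add_comm]
  have hgoalm : ∀ x ∈ Sm, act ((2 : F)⁻¹ • (T w + hash (T w))) x ∈ Sm := by
    intro x hx
    apply hSm_mem
    rw [hA]
    have hx' := hSm_fix x hx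
    simp only [LinearMap.smul_apply, LinearMap.add_apply, Module.End.mul_apply]
    rw [hx', map_smul, map_add, hττx, map_neg, map_neg]
    module
  refine ⟨hgoalp, hgoalm, ?_, ?_⟩
  · -- trace on Sp
    intro hp
    by_cases h2 : (2 : F) = 0
    · have h2inv : (2 : F)⁻¹ = 0 := by rw [h2, inv_zero]
      have hz : ((2 : F)⁻¹ • (T w + hash (T w))) = (0 : H) := by rw [h2inv, zero_smul]
      have hres : (act ((2 : F)⁻¹ • (T w + hash (T w)))).restrict hp = 0 := by
        apply LinearMap.ext
        intro x
        apply Subtype.ext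
        rw [LinearMap.restrict_apply]
        show act ((2 : F)⁻¹ • (T w + hash (T w))) x.val = 0
        rw [hz, map_zero]
        exact LinearMap.zero_apply _
      rw [hres, map_zero, h2inv, zero_mul]
    · have h2inv : (2 : F)⁻¹ * 2 = 1 := inv_mul_cancel₀ h2
      set p : Module.End F (StdTab μ n → F) := (2 : F)⁻¹ • (1 + τ) with hpdef
      have hfixp : ∀ x ∈ Sp, p x = x := by
        intro x hx
        rw [hpdef]
        simp only [LinearMap.smul_apply, LinearMap.add_apply, Module.End.one_apply]
        rw [hSp_fix x hx, ← two_smul F x, smul_smul, h2inv, one_smul]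
      have hrangep : ∀ x, p x ∈ Sp := by
        intro x
        apply hSp_mem
        rw [hpdef]
        simp only [LinearMap.smul_apply, LinearMap.add_apply, Module.End.one_apply]
        rw [map_smul, map_add, hττx, add_comm]
      rw [trace_restrict_eq_trace_comp Sp _ p hfixp hrangep hp, hA]
      have hPA : p ∘ₗ ((2 : F)⁻¹ • (f + τ * f * τ)) =
          ((2 : F)⁻¹ * (2 : F)⁻¹) • (f + τ * f * τ + (τ * f + f * τ)) := by
        rw [← Module.End.mul_eq_comp, hpdef, smul_mul_assoc, mul_smul_comm, smul_smul]
        have hexp : (1 + τ) * (f + τ * f * τ) =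
            f + τ * f * τ + (τ * f + τ * (τ * f * τ)) := by noncomm_ring
        rw [hexp, show τ * (τ * f * τ) = (τ * τ) * (f * τ) from by noncomm_ring, hττ, one_mul]
      rw [hPA, map_smul, map_add, map_add, map_add]
      rw [show LinearMap.trace F (StdTab μ n → F) (τ * f * τ) =
          LinearMap.trace F (StdTab μ n → F) f from by
        rw [LinearMap.trace_mul_comm, ← mul_assoc, hττ, one_mul]]
      rw [show LinearMap.trace F (StdTab μ n → F) (f * τ) =
          LinearMap.trace F (StdTab μ n → F) (τ * f) from LinearMap.trace_mul_comm _ _ _]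
      rw [show τ * f = (selfTau hself n) ∘ₗ (act (T w)) from rfl]
      rw [smul_eq_mul]
      field_simp
      ring
  · -- trace on Sm
    intro hm
    by_cases h2 : (2 : F) = 0
    · have h2inv : (2 : F)⁻¹ = 0 := by rw [h2, inv_zero]
      have hz : ((2 : F)⁻¹ • (T w + hash (T w))) = (0 : H) := by rw [h2inv, zero_smul]
      have hres : (act ((2 : F)⁻¹ • (T w + hash (T w)))).restrict hm = 0 := by
        apply LinearMap.ext
        intro x
        apply Subtype.ext
        rw [LinearMap.restrict_apply]
        show act ((2 : F)⁻¹ • (T w + hash (T w))) x.val = 0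
        rw [hz, map_zero]
        exact LinearMap.zero_apply _
      rw [hres, map_zero, h2inv, zero_mul]
    · have h2inv : (2 : F)⁻¹ * 2 = 1 := inv_mul_cancel₀ h2
      set p : Module.End F (StdTab μ n → F) := (2 : F)⁻¹ • (1 - τ) with hpdef
      have hfixp : ∀ x ∈ Sm, p x = x := by
        intro x hx
        rw [hpdef]
        simp only [LinearMap.smul_apply, LinearMap.sub_apply, Module.End.one_apply]
        rw [hSm_fix x hx, sub_neg_eq_add, ← two_smul F x, smul_smul, h2inv, one_smul]
      have hrangep : ∀ x, p x ∈ Sm := by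
        intro x
        apply hSm_mem
        rw [hpdef]
        simp only [LinearMap.smul_apply, LinearMap.sub_apply, Module.End.one_apply]
        rw [map_smul, map_sub, hττx, ← smul_neg, neg_sub]
      rw [trace_restrict_eq_trace_comp Sm _ p hfixp hrangep hm, hA]
      have hPA : p ∘ₗ ((2 : F)⁻¹ • (f + τ * f * τ)) =
          ((2 : F)⁻¹ * (2 : F)⁻¹) • (f + τ * f * τ - (τ * f + f * τ)) := by
        rw [← Module.End.mul_eq_comp, hpdef, smul_mul_assoc, mul_smul_comm, smul_smul]
        have hexp : (1 - τ) * (f + τ * f * τ) =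
            f + τ * f * τ - (τ * f + τ * (τ * f * τ)) := by
          rw [sub_mul, one_mul, mul_add]
        rw [hexp, show τ * (τ * f * τ) = (τ * τ) * (f * τ) from by noncomm_ring, hττ, one_mul]
      rw [hPA, map_smul, map_sub, map_add, map_add]
      rw [show LinearMap.trace F (StdTab μ n → F) (τ * f * τ) =
          LinearMap.trace F (StdTab μ n → F) f from by
        rw [LinearMap.trace_mul_comm, ← mul_assoc, hττ, one_mul]]
      rw [show LinearMap.trace F (StdTab μ n → F) (f * τ) =
          LinearMap.trace F (StdTab μ n → F) (τ * f) from LinearMap.trace_mul_comm _ _ _]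
      rw [show τ * f = (selfTau hself n) ∘ₗ (act (T w)) from rfl]
      rw [smul_eq_mul]
      field_simp
      ring

end
end

section
/- Let λ be a self-conjugate partition of n and κ a composition of n with ℓ(κ) = d(λ) parts. Then κ symmetrically covers λ if and only if the weakly decreasing rearrangement of κ equals h(λ); moreover, when this holds, the symmetric covering of λ of type κ is unique. -/
open scoped Classical

noncomputable section

/-- The length `d(λ)` of the diagonal of the diagram of `λ`. -/
def ddiag (μ : YoungDiagram) : ℕ := (μ.cells.filter fun x => x.1 = x.2).card

/-- The diagonal hook lengths `h(λ) = (h₁,…,h_{d(λ)})`, with `hᵢ = λᵢ + λ'ᵢ − 2i + 1`. -/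
def hooks (μ : YoungDiagram) : List ℕ :=
  (List.range (ddiag μ)).map fun i => μ.rowLen i + μ.colLen i - (2 * i + 1)

/-- `Λ` is a symmetric covering of `μ` of type `κ`: a chain of self-conjugate partitions
`∅ = Λ₀ ⊂ Λ₁ ⊂ ⋯ ⊂ Λ_d = μ` such that each `Λ_z/Λ_{z−1}` is a strip (its multiset of
contents consists of distinct consecutive integers) and `|Λ_z| = κ₁ + ⋯ + κ_z`. -/
def IsSymCover (μ : YoungDiagram) (κ : List ℕ) (Λ : ℕ → YoungDiagram) : Prop :=
  (Λ 0).cells = ∅ ∧ Λ κ.length = μ ∧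
    ∀ z < κ.length,
      (Λ z).cells ⊆ (Λ (z + 1)).cells ∧
      (Λ (z + 1)).transpose = Λ (z + 1) ∧
      (Λ (z + 1)).card = (κ.take (z + 1)).sum ∧
      (∃ a : ℤ,
        (((Λ (z + 1)).cells \ (Λ z).cells).val.map fun x => ((x.2 : ℤ) - (x.1 : ℤ)))
          = (Multiset.range (((Λ (z + 1)).cells \ (Λ z).cells).card)).map
              fun j => a + (j : ℤ))

/-- number of cells of content `k`. -/
def fD (D : YoungDiagram) (k : ℤ) : ℕ :=
  (D.cells.filter fun x => (x.2 : ℤ) - (x.1 : ℤ) = k).card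

lemma lowerFinset_mem_iff {A : Finset ℕ} (h : ∀ r ∈ A, ∀ r' ≤ r, r' ∈ A) :
    ∀ r, r ∈ A ↔ r < A.card := by
  intro r
  constructor
  · intro hr
    have hsub : Finset.range (r + 1) ⊆ A := by
      intro x hx
      exact h r hr x (by simpa using Nat.lt_succ_iff.mp (Finset.mem_range.mp hx))
    have := Finset.card_le_card hsub
    rw [Finset.card_range] at this
    omega
  · intro hr
    by_contra hc
    have hsub : A ⊆ Finset.range r := by
      intro x hx
      rw [Finset.mem_range]
      by_contra hx'
      exact hc (h x hx r (by omega))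
    have := Finset.card_le_card hsub
    simp at this; omega

lemma mem_iff_lt_fD (D : YoungDiagram) (k r : ℕ) :
    (r, r + k) ∈ D ↔ r < fD D k := by
  classical
  set A : Finset ℕ :=
    (D.cells.filter fun x => (x.2 : ℤ) - (x.1 : ℤ) = (k : ℤ)).image Prod.fst with hA
  have hcard : A.card = fD D k := by
    rw [hA, fD]
    apply Finset.card_image_of_injOn
    intro x hx y hy hxy
    have hx' := Finset.mem_filter.mp (Finset.mem_coe.mp hx)
    have hy' := Finset.mem_filter.mp (Finset.mem_coe.mp hy)
    have : x.2 = y.2 := by omega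
    exact Prod.ext hxy this
  have hmem : ∀ r' : ℕ, r' ∈ A ↔ (r', r' + k) ∈ D := by
    intro r'
    rw [hA]
    simp only [Finset.mem_image, Finset.mem_filter, YoungDiagram.mem_cells]
    constructor
    · rintro ⟨x, ⟨hx, hk⟩, hfst⟩
      have : x = (r', r' + k) := by
        apply Prod.ext hfst
        omega
      rwa [this] at hx
    · intro hr'
      exact ⟨(r', r' + k), ⟨hr', by push_cast; ring⟩, rfl⟩
  have hlow : ∀ r' ∈ A, ∀ r'' ≤ r', r'' ∈ A := by
    intro r' hr' r'' hle
    rw [hmem] at hr' ⊢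
    exact D.up_left_mem hle (by omega) hr'
  rw [← hmem, lowerFinset_mem_iff hlow, hcard]

lemma fD_transpose (D : YoungDiagram) (k : ℤ) : fD D.transpose k = fD D (-k) := by
  classical
  rw [fD, fD]
  apply Finset.card_bij (fun x _ => Prod.swap x)
  · intro x hx
    simp only [Finset.mem_filter, YoungDiagram.mem_cells] at hx ⊢
    rcases hx with ⟨hx, hk⟩
    rw [YoungDiagram.mem_transpose] at hx
    exact ⟨hx, by simp [Prod.swap]; omega⟩
  · intro x hx y hy hxy
    exact Prod.swap_injective hxy
  · intro y hy
    refine ⟨Prod.swap y, ?_, by simp⟩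
    simp only [Finset.mem_filter, YoungDiagram.mem_cells] at hy ⊢
    rw [YoungDiagram.mem_transpose]
    refine ⟨by simpa using hy.1, by simp [Prod.swap]; omega⟩

lemma fD_symm {D : YoungDiagram} (h : D.transpose = D) (k : ℤ) : fD D (-k) = fD D k := by
  conv_rhs => rw [← h]
  rw [fD_transpose]

lemma eq_of_fD_eq {D E : YoungDiagram} (hD : D.transpose = D) (hE : E.transpose = E)
    (h : ∀ k, fD D k = fD E k) : D = E := by
  have key : ∀ x : ℕ × ℕ, x.1 ≤ x.2 → (x ∈ D ↔ x ∈ E) := by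
    rintro ⟨r, c⟩ hrc
    simp only at hrc
    obtain ⟨k, rfl⟩ : ∃ k, c = r + k := ⟨c - r, by omega⟩
    rw [mem_iff_lt_fD, mem_iff_lt_fD, h]
  ext x
  rcases x with ⟨r, c⟩
  simp only [YoungDiagram.mem_cells]
  rcases le_or_gt r c with hrc | hrc
  · exact key (r, c) hrc
  · have hD' : (r, c) ∈ D ↔ (c, r) ∈ D := by
      conv_lhs => rw [← hD]
      rw [YoungDiagram.mem_transpose, Prod.swap_prod_mk]
    have hE' : (r, c) ∈ E ↔ (c, r) ∈ E := by
      conv_lhs => rw [← hE]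
      rw [YoungDiagram.mem_transpose, Prod.swap_prod_mk]
    rw [hD', hE']
    exact key (c, r) (le_of_lt hrc)

/-- `FS S k` = number of elements of `S` that are `≥ k`. -/
def FS (S : Finset ℕ) (k : ℕ) : ℕ := (S.filter fun a => k ≤ a).card

lemma FS_anti (S : Finset ℕ) {k l : ℕ} (h : k ≤ l) : FS S l ≤ FS S k := by
  apply Finset.card_le_card
  intro a ha
  rw [Finset.mem_filter] at ha ⊢
  exact ⟨ha.1, le_trans h ha.2⟩

lemma FS_le_FS_add (S : Finset ℕ) (u j : ℕ) : FS S u ≤ FS S (u + j) + j := by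
  have hsub : S.filter (fun a => u ≤ a) ⊆ (S.filter fun a => u + j ≤ a) ∪ Finset.Ico u (u + j) := by
    intro a ha
    rw [Finset.mem_filter] at ha
    rcases le_or_gt (u + j) a with hc | hc
    · exact Finset.mem_union_left _ (Finset.mem_filter.mpr ⟨ha.1, hc⟩)
    · exact Finset.mem_union_right _ (Finset.mem_Ico.mpr ⟨ha.2, hc⟩)
  calc FS S u ≤ _ := Finset.card_le_card hsub
    _ ≤ _ + _ := Finset.card_union_le _ _
    _ ≤ FS S (u + j) + j := by rw [Nat.card_Ico, FS]; omega

lemma FS_mono {S T : Finset ℕ} (h : S ⊆ T) (k : ℕ) : FS S k ≤ FS T k :=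
  Finset.card_le_card (Finset.filter_subset_filter _ h)

lemma FS_card_le (S : Finset ℕ) (k : ℕ) : FS S k ≤ S.card :=
  Finset.card_le_card (Finset.filter_subset _ _)

lemma FS_le_sup {S : Finset ℕ} {k : ℕ} (h : 0 < FS S k) : k ≤ S.sup id := by
  obtain ⟨a, ha⟩ := Finset.card_pos.mp h
  rw [Finset.mem_filter] at ha
  exact le_trans ha.2 (Finset.le_sup (f := id) ha.1)

lemma card_le_sup_succ (S : Finset ℕ) : S.card ≤ S.sup id + 1 := by
  have : S ⊆ Finset.range (S.sup id + 1) := by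
    intro a ha
    rw [Finset.mem_range]
    exact Nat.lt_succ_of_le (Finset.le_sup (f := id) ha)
  simpa using Finset.card_le_card this

/-- The self-conjugate Young diagram whose diagonal arm lengths are the elements of `S`. -/
def diagOf (S : Finset ℕ) : YoungDiagram where
  cells := (Finset.range (2 * (S.sup id + 1)) ×ˢ Finset.range (2 * (S.sup id + 1))).filter
    (fun x => min x.1 x.2 < FS S (max x.1 x.2 - min x.1 x.2))
  isLowerSet := by
    rintro ⟨r, c⟩ ⟨r', c'⟩ hle hx
    rw [Finset.mem_coe, Finset.mem_filter] at hx ⊢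
    obtain ⟨hr', hc'⟩ : r' ≤ r ∧ c' ≤ c := hle
    simp only [Finset.mem_product, Finset.mem_range] at hx ⊢
    obtain ⟨⟨hr, hc⟩, hP⟩ := hx
    refine ⟨⟨by omega, by omega⟩, ?_⟩
    set m := min r c with hm
    set u := max r c - min r c with hu
    set m' := min r' c' with hm'
    set u' := max r' c' - min r' c' with hu'
    have h1 : m' ≤ m := by omega
    rcases le_or_gt u' u with hcase | hcase
    · exact lt_of_lt_of_le (lt_of_le_of_lt h1 hP) (FS_anti S hcase)
    · have hj : u' = u + (u' - u) := by omega
      have := FS_le_FS_add S u (u' - u)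
      have hsum : u' + m' ≤ u + m := by omega
      rw [← hj] at this
      omega

lemma mem_diagOf {S : Finset ℕ} {x : ℕ × ℕ} :
    x ∈ diagOf S ↔ min x.1 x.2 < FS S (max x.1 x.2 - min x.1 x.2) := by
  show x ∈ (diagOf S).cells ↔ _
  rw [diagOf]
  simp only [Finset.mem_filter, Finset.mem_product, Finset.mem_range]
  constructor
  · exact fun h => h.2
  · intro h
    refine ⟨⟨?_, ?_⟩, h⟩ <;>
    · have h1 : FS S (max x.1 x.2 - min x.1 x.2) ≤ S.sup id + 1 :=
        le_trans (FS_card_le _ _) (card_le_sup_succ S)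
      have h2 : max x.1 x.2 - min x.1 x.2 ≤ S.sup id := FS_le_sup (by omega)
      omega

lemma mem_diagOf' (S : Finset ℕ) (r k : ℕ) :
    (r, r + k) ∈ diagOf S ↔ r < FS S k := by
  rw [mem_diagOf]
  have h1 : min r (r + k) = r := by omega
  have h2 : max r (r + k) = r + k := by omega
  rw [h1, h2]
  congr! 2
  omega

lemma transpose_diagOf (S : Finset ℕ) : (diagOf S).transpose = diagOf S := by
  ext x
  rw [YoungDiagram.mem_cells, YoungDiagram.mem_cells, YoungDiagram.mem_transpose,
    mem_diagOf, mem_diagOf]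
  rcases x with ⟨r, c⟩
  simp only [Prod.swap_prod_mk]
  rw [min_comm, max_comm]

lemma nat_eq_of_forall_lt_iff {a b : ℕ} (h : ∀ r, r < a ↔ r < b) : a = b := by
  rcases lt_trichotomy a b with hc | hc | hc
  · have := (h a).mpr hc; omega
  · exact hc
  · have := (h b).mp hc; omega

lemma fD_diagOf (S : Finset ℕ) (k : ℤ) : fD (diagOf S) k = FS S k.natAbs := by
  rcases le_or_gt 0 k with hk | hk
  · obtain ⟨m, rfl⟩ : ∃ m : ℕ, k = (m : ℤ) := ⟨k.toNat, by omega⟩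
    rw [Int.natAbs_natCast]
    apply nat_eq_of_forall_lt_iff
    intro r
    rw [← mem_iff_lt_fD, mem_diagOf' S r m]
  · have hsym := fD_symm (transpose_diagOf S) (-k)
    rw [neg_neg] at hsym
    rw [hsym]
    obtain ⟨m, hm⟩ : ∃ m : ℕ, -k = (m : ℤ) := ⟨(-k).toNat, by omega⟩
    rw [hm]
    have : k.natAbs = m := by omega
    rw [this]
    apply nat_eq_of_forall_lt_iff
    intro r
    rw [← mem_iff_lt_fD, mem_diagOf' S r m]

lemma diagOf_mono {S T : Finset ℕ} (h : S ⊆ T) : (diagOf S).cells ⊆ (diagOf T).cells := by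
  intro x hx
  rw [YoungDiagram.mem_cells, mem_diagOf] at hx ⊢
  exact lt_of_lt_of_le hx (FS_mono h _)

lemma diagOf_empty : (diagOf (∅ : Finset ℕ)).cells = ∅ := by
  ext x
  simp only [YoungDiagram.mem_cells, mem_diagOf, Finset.notMem_empty, iff_false]
  rw [FS]
  simp

lemma fD_add_of_subset {D D' : YoungDiagram} (h : D.cells ⊆ D'.cells) (k : ℤ) :
    fD D' k = fD D k + ((D'.cells \ D.cells).filter fun x => (x.2 : ℤ) - (x.1 : ℤ) = k).card := by
  classical
  rw [fD, fD]
  have hsplit : D'.cells.filter (fun x => (x.2 : ℤ) - (x.1 : ℤ) = k)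
      = D.cells.filter (fun x => (x.2 : ℤ) - (x.1 : ℤ) = k)
        ∪ (D'.cells \ D.cells).filter (fun x => (x.2 : ℤ) - (x.1 : ℤ) = k) := by
    rw [← Finset.filter_union, Finset.union_sdiff_of_subset h]
  rw [hsplit]
  exact Finset.card_union_of_disjoint (Finset.disjoint_filter_filter Finset.disjoint_sdiff)

lemma card_add_of_subset {D D' : YoungDiagram} (h : D.cells ⊆ D'.cells) :
    D'.card = D.card + (D'.cells \ D.cells).card := by
  have := Finset.card_sdiff_add_card_eq_card h
  show D'.cells.card = D.cells.card + _
  omega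

lemma count_contents (T : Finset (ℕ × ℕ)) (k : ℤ) :
    (T.val.map fun x => (x.2 : ℤ) - (x.1 : ℤ)).count k
      = (T.filter fun x => (x.2 : ℤ) - (x.1 : ℤ) = k).card := by
  classical
  rw [Multiset.count_map, Finset.card_def, Finset.filter_val]
  congr 1
  apply Multiset.filter_congr
  intro x _
  constructor <;> (intro h; omega)

lemma range_map_norm (a : ℤ) (m : ℕ) :
    ((Multiset.range m).map fun j => a + (j : ℤ))
      = Multiset.map (fun j : ℕ => a + (j : ℤ)) (Multiset.range m) := by
  show Multiset.map _ (Multiset.bind _ _) = _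
  rw [show (fun a : ℕ => (pure (a : ℤ) : Multiset ℤ)) = fun a : ℕ => ({(a : ℤ)} : Multiset ℤ) from rfl]
  rw [Multiset.bind_singleton, Multiset.map_map]
  rfl

lemma count_range_shift (a : ℤ) (m : ℕ) (k : ℤ) :
    ((Multiset.map (fun j : ℕ => a + (j : ℤ)) (Multiset.range m)).count k)
      = if a ≤ k ∧ k < a + m then 1 else 0 := by
  classical
  by_cases h : a ≤ k ∧ k < a + m
  · obtain ⟨j0, hj0, rfl⟩ : ∃ j0 : ℕ, j0 < m ∧ k = a + (j0 : ℤ) :=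
      ⟨(k - a).toNat, by omega, by omega⟩
    have hinj : Function.Injective fun j : ℕ => a + (j : ℤ) := by
      intro x y hxy; simp only at hxy; omega
    rw [Multiset.count_map_eq_count' _ _ hinj]
    rw [if_pos h]
    exact Multiset.count_eq_one_of_mem (Multiset.nodup_range m) (Multiset.mem_range.mpr hj0)
  · rw [if_neg h, Multiset.count_eq_zero]
    intro hc
    obtain ⟨j, hj, hjk⟩ := Multiset.mem_map.mp hc
    rw [Multiset.mem_range] at hj
    exact h ⟨by omega, by omega⟩

lemma countP_le_split (s : Multiset ℕ) (v : ℕ) :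
    s.countP (fun x => v ≤ x) = s.count v + s.countP (fun x => v + 1 ≤ x) := by
  classical
  induction s using Multiset.induction_on with
  | empty => simp
  | cons a s ih =>
    simp only [Multiset.countP_cons, Multiset.count_cons, ih]
    split_ifs <;> omega

lemma multiset_eq_of_countP_ge {s t : Multiset ℕ}
    (h : ∀ v : ℕ, s.countP (fun x => v ≤ x) = t.countP (fun x => v ≤ x)) : s = t := by
  classical
  rw [Multiset.ext]
  intro v
  have h1 := h v
  have h2 := h (v + 1)
  have e1 := countP_le_split s v
  have e2 := countP_le_split t v
  omega

lemma diagOf_insert_contents {S : Finset ℕ} {t : ℕ} (ht : t ∉ S) :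
    (((diagOf (insert t S)).cells \ (diagOf S).cells).val.map fun x => (x.2 : ℤ) - (x.1 : ℤ))
      = Multiset.map (fun j : ℕ => (-(t : ℤ)) + (j : ℤ)) (Multiset.range (2 * t + 1)) := by
  classical
  apply Multiset.ext.mpr
  intro k
  rw [count_contents, count_range_shift]
  have hsub := diagOf_mono (Finset.subset_insert t S)
  have hadd := fD_add_of_subset hsub k
  rw [fD_diagOf, fD_diagOf] at hadd
  have hFS : FS (insert t S) k.natAbs = FS S k.natAbs + (if k.natAbs ≤ t then 1 else 0) := by
    rw [FS, FS, Finset.filter_insert]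
    by_cases hkt : k.natAbs ≤ t
    · rw [if_pos hkt, if_pos hkt, Finset.card_insert_of_notMem
        (fun hc => ht (Finset.mem_filter.mp hc).1)]
    · rw [if_neg hkt, if_neg hkt, add_zero]
  by_cases hkt : k.natAbs ≤ t
  · rw [if_pos hkt] at hFS
    rw [if_pos (show -(t:ℤ) ≤ k ∧ k < -(t:ℤ) + ((2*t+1 : ℕ) : ℤ) by omega)]
    omega
  · rw [if_neg hkt] at hFS
    rw [if_neg (show ¬(-(t:ℤ) ≤ k ∧ k < -(t:ℤ) + ((2*t+1 : ℕ) : ℤ)) by omega)]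
    omega

lemma diagOf_insert_card {S : Finset ℕ} {t : ℕ} (ht : t ∉ S) :
    (diagOf (insert t S)).card = (diagOf S).card + (2 * t + 1) := by
  have hsub := diagOf_mono (Finset.subset_insert t S)
  rw [card_add_of_subset hsub]
  congr 1
  have h := congrArg Multiset.card (diagOf_insert_contents ht)
  rw [Multiset.card_map, Multiset.card_map, Multiset.card_range] at h
  rw [Finset.card_def]
  exact h

lemma step_analysis {D D' : YoungDiagram} (hD : D.transpose = D) (hD' : D'.transpose = D')
    (hsub : D.cells ⊆ D'.cells) {m : ℕ} (hm : (D'.cells \ D.cells).card = m) (hmpos : 0 < m)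
    (hstrip : ∃ a : ℤ, ((D'.cells \ D.cells).val.map fun x => (x.2 : ℤ) - (x.1 : ℤ))
        = (Multiset.range ((D'.cells \ D.cells).card)).map fun j => a + (j : ℤ)) :
    ∃ t : ℕ, m = 2 * t + 1 ∧
      ∀ k : ℤ, fD D' k = fD D k + (if k.natAbs ≤ t then 1 else 0) := by
  classical
  obtain ⟨a, ha⟩ := hstrip
  rw [range_map_norm, hm] at ha
  have hχ : ∀ k : ℤ, ((D'.cells \ D.cells).filter fun x => (x.2 : ℤ) - (x.1 : ℤ) = k).card
      = if a ≤ k ∧ k < a + m then 1 else 0 := by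
    intro k
    rw [← count_contents, ha, count_range_shift]
  have hadd : ∀ k : ℤ, fD D' k = fD D k + (if a ≤ k ∧ k < a + m then 1 else 0) := by
    intro k
    rw [fD_add_of_subset hsub k, hχ]
  have hsymm : ∀ k : ℤ, (if a ≤ k ∧ k < a + m then (1:ℕ) else 0)
      = if a ≤ -k ∧ -k < a + m then 1 else 0 := by
    intro k
    have h1 := hadd k
    have h2 := hadd (-k)
    have h3 := fD_symm hD k
    have h4 := fD_symm hD' k
    omega
  have e1 : (if a ≤ a ∧ a < a + m then (1:ℕ) else 0) = 1 := if_pos ⟨le_refl a, by omega⟩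
  have e2 : (if a ≤ (a + m - 1) ∧ (a + m - 1) < a + m then (1:ℕ) else 0) = 1 :=
    if_pos ⟨by omega, by omega⟩
  have f1 := hsymm a
  have f2 := hsymm (a + m - 1)
  rw [e1] at f1
  rw [e2] at f2
  have g1 : a ≤ -a ∧ -a < a + m := by
    by_contra hc
    rw [if_neg hc] at f1
    omega
  have g2 : a ≤ -(a + m - 1) ∧ -(a + m - 1) < a + m := by
    by_contra hc
    rw [if_neg hc] at f2
    omega
  have h2a : 2 * a = 1 - m := by omega
  refine ⟨(-a).toNat, by omega, ?_⟩
  intro k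
  rw [hadd k]
  congr 1
  have : (a ≤ k ∧ k < a + m) ↔ k.natAbs ≤ (-a).toNat := by omega
  split_ifs with c1 c2 <;> omega

section MuStruct

variable {μ : YoungDiagram}

/-- arm length of the `i`-th diagonal cell -/
def armOf (μ : YoungDiagram) (i : ℕ) : ℕ := μ.rowLen i - (i + 1)

lemma ddiag_eq_fD0 (μ : YoungDiagram) : ddiag μ = fD μ 0 := by
  rw [ddiag, fD]
  congr 1
  apply Finset.filter_congr
  intro x _
  constructor <;> (intro h; omega)

lemma mem_diag_iff (μ : YoungDiagram) (r : ℕ) : (r, r) ∈ μ ↔ r < ddiag μ := by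
  rw [ddiag_eq_fD0]
  have := mem_iff_lt_fD μ 0 r
  rw [add_zero] at this
  exact this

lemma rowLen_lt_of_lt_ddiag {r : ℕ} (h : r < ddiag μ) : r < μ.rowLen r :=
  YoungDiagram.mem_iff_lt_rowLen.mp ((mem_diag_iff μ r).mpr h)

lemma armOf_strict_anti {i j : ℕ} (hij : i < j) (hj : j < ddiag μ) :
    armOf μ j < armOf μ i := by
  have h1 := μ.rowLen_anti i j (le_of_lt hij)
  have h2 := rowLen_lt_of_lt_ddiag hj
  rw [armOf, armOf]
  omega

lemma armOf_anti {i j : ℕ} (hij : i ≤ j) (hj : j < ddiag μ) :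
    armOf μ j ≤ armOf μ i := by
  rcases eq_or_lt_of_le hij with rfl | h
  · exact le_refl _
  · exact le_of_lt (armOf_strict_anti h hj)

lemma mem_iff_arm (μ : YoungDiagram) (r m : ℕ) :
    (r, r + m) ∈ μ ↔ r < ddiag μ ∧ m ≤ armOf μ r := by
  rw [YoungDiagram.mem_iff_lt_rowLen]
  constructor
  · intro h
    have hd : r < ddiag μ := by
      rw [← mem_diag_iff, YoungDiagram.mem_iff_lt_rowLen]
      omega
    refine ⟨hd, ?_⟩
    rw [armOf]
    omega
  · rintro ⟨hd, hm⟩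
    have := rowLen_lt_of_lt_ddiag hd
    rw [armOf] at hm
    omega

/-- the finset of diagonal arm lengths -/
def armSet (μ : YoungDiagram) : Finset ℕ := ((List.range (ddiag μ)).map (armOf μ)).toFinset

lemma mem_armSet {a : ℕ} : a ∈ armSet μ ↔ ∃ i < ddiag μ, armOf μ i = a := by
  rw [armSet, List.mem_toFinset, List.mem_map]
  constructor
  · rintro ⟨i, hi, rfl⟩
    exact ⟨i, List.mem_range.mp hi, rfl⟩
  · rintro ⟨i, hi, rfl⟩
    exact ⟨i, List.mem_range.mpr hi, rfl⟩

lemma FS_armSet (k : ℕ) :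
    FS (armSet μ) k = ((Finset.range (ddiag μ)).filter fun i => k ≤ armOf μ i).card := by
  rw [FS]
  have himg : (armSet μ).filter (fun a => k ≤ a)
      = ((Finset.range (ddiag μ)).filter fun i => k ≤ armOf μ i).image (armOf μ) := by
    ext a
    rw [Finset.mem_filter, Finset.mem_image, mem_armSet]
    constructor
    · rintro ⟨⟨i, hi, rfl⟩, hk⟩
      exact ⟨i, Finset.mem_filter.mpr ⟨Finset.mem_range.mpr hi, hk⟩, rfl⟩
    · rintro ⟨i, hi, rfl⟩
      rw [Finset.mem_filter, Finset.mem_range] at hi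
      exact ⟨⟨i, hi.1, rfl⟩, hi.2⟩
  rw [himg]
  apply Finset.card_image_of_injOn
  intro x hx y hy hxy
  rw [Finset.coe_filter, Set.mem_setOf_eq, Finset.mem_range] at hx hy
  by_contra hne
  rcases Nat.lt_or_ge x y with hc | hc
  · have := armOf_strict_anti hc hy.1; omega
  · have hc' : y < x := by omega
    have := armOf_strict_anti hc' hx.1; omega

lemma fD_mu_eq (hself : μ.transpose = μ) (k : ℤ) :
    fD μ k = FS (armSet μ) k.natAbs := by
  have key : ∀ m : ℕ, fD μ (m : ℤ) = FS (armSet μ) m := by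
    intro m
    apply nat_eq_of_forall_lt_iff
    intro r
    rw [← mem_iff_lt_fD, mem_iff_arm, FS_armSet]
    set B := (Finset.range (ddiag μ)).filter fun i => m ≤ armOf μ i with hB
    have hlow : ∀ r' ∈ B, ∀ r'' ≤ r', r'' ∈ B := by
      intro r' hr' r'' hle
      rw [hB, Finset.mem_filter, Finset.mem_range] at hr' ⊢
      exact ⟨by omega, le_trans hr'.2 (armOf_anti hle hr'.1)⟩
    rw [← lowerFinset_mem_iff hlow, hB, Finset.mem_filter, Finset.mem_range]
  rcases le_or_gt 0 k with hk | hk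
  · obtain ⟨m, rfl⟩ : ∃ m : ℕ, k = (m : ℤ) := ⟨k.toNat, by omega⟩
    rw [key m, Int.natAbs_natCast]
  · rw [← fD_symm hself k]
    obtain ⟨m, hm⟩ : ∃ m : ℕ, -k = (m : ℤ) := ⟨(-k).toNat, by omega⟩
    rw [hm, key m]
    congr 1
    omega

lemma mu_eq_diagOf (hself : μ.transpose = μ) : μ = diagOf (armSet μ) :=
  eq_of_fD_eq hself (transpose_diagOf _) (fun k => by rw [fD_diagOf, fD_mu_eq hself])

lemma hooks_eq_list (hself : μ.transpose = μ) :
    hooks μ = (List.range (ddiag μ)).map fun i => 2 * armOf μ i + 1 := by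
  rw [hooks]
  apply List.map_congr_left
  intro i hi
  rw [List.mem_range] at hi
  have hcol : μ.colLen i = μ.rowLen i := by
    conv_lhs => rw [← hself]
    rw [YoungDiagram.colLen_transpose]
  have := rowLen_lt_of_lt_ddiag hi
  rw [hcol, armOf]
  omega

lemma armOf_nodup : ((List.range (ddiag μ)).map (armOf μ)).Nodup := by
  apply List.Nodup.map_on _ List.nodup_range
  intro x hx y hy hxy
  rw [List.mem_range] at hx hy
  by_contra hne
  rcases Nat.lt_or_ge x y with hc | hc
  · have := armOf_strict_anti hc hy; omega
  · have hc' : y < x := by omega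
    have := armOf_strict_anti hc' hx; omega

end MuStruct

lemma transpose_of_cells_empty {D : YoungDiagram} (h : D.cells = ∅) : D.transpose = D := by
  ext x
  constructor <;> intro hx
  · rw [YoungDiagram.mem_cells, YoungDiagram.mem_transpose, ← YoungDiagram.mem_cells, h] at hx
    exact absurd hx (Finset.notMem_empty _)
  · rw [h] at hx
    exact absurd hx (Finset.notMem_empty _)

lemma fD_of_cells_empty {D : YoungDiagram} (h : D.cells = ∅) (k : ℤ) : fD D k = 0 := by
  rw [fD, h, Finset.filter_empty, Finset.card_empty]

lemma FS_armSet_countP {μ : YoungDiagram} (k : ℕ) :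
    FS (armSet μ) k
      = ((Multiset.range (ddiag μ)).map (armOf μ)).countP (fun x => k ≤ x) := by
  classical
  rw [Multiset.countP_map, FS_armSet, Finset.card_def, Finset.filter_val, Finset.range_val]

lemma cover_analysis {μ : YoungDiagram} {κ : List ℕ}
    (hκpos : ∀ k ∈ κ, 0 < k) {Λ : ℕ → YoungDiagram} (hc : IsSymCover μ κ Λ) :
    ∃ tf : ℕ → ℕ,
      (∀ z, z < κ.length → κ.getD z 0 = 2 * tf z + 1) ∧
      (∀ z ≤ κ.length, (Λ z).transpose = Λ z) ∧
      (∀ z ≤ κ.length, ∀ k : ℤ,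
        fD (Λ z) k = ((Multiset.range z).map tf).countP (fun x => k.natAbs ≤ x)) := by
  classical
  obtain ⟨h0, hend, hstep⟩ := hc
  have hself' : ∀ z ≤ κ.length, (Λ z).transpose = Λ z := by
    intro z hz
    rcases z with _ | z
    · exact transpose_of_cells_empty h0
    · exact (hstep z (by omega)).2.1
  have hcard : ∀ z ≤ κ.length, (Λ z).card = (κ.take z).sum := by
    intro z hz
    rcases z with _ | z
    · show (Λ 0).cells.card = _
      rw [h0]
      simp
    · exact (hstep z (by omega)).2.2.1
  have hdiffcard : ∀ z < κ.length,
      ((Λ (z + 1)).cells \ (Λ z).cells).card = κ.getD z 0 := by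
    intro z hz
    have h1 := hcard z (by omega)
    have h2 := hcard (z + 1) (by omega)
    have hsub := (hstep z hz).1
    have h3 := Finset.card_sdiff_add_card_eq_card hsub
    have hsum : (κ.take (z + 1)).sum = (κ.take z).sum + κ.getD z 0 := by
      rw [List.sum_take_succ κ z hz, List.getD_eq_getElem κ 0 hz]
    have h1' : (Λ z).cells.card = (κ.take z).sum := h1
    have h2' : (Λ (z + 1)).cells.card = (κ.take (z + 1)).sum := h2
    omega
  have H : ∀ z, ∃ t, z < κ.length → (κ.getD z 0 = 2 * t + 1 ∧
      ∀ k : ℤ, fD (Λ (z + 1)) k = fD (Λ z) k + (if k.natAbs ≤ t then 1 else 0)) := by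
    intro z
    by_cases hz : z < κ.length
    · obtain ⟨hsub, htr, hcards, hstrip⟩ := hstep z hz
      have hpos : 0 < κ.getD z 0 := by
        rw [List.getD_eq_getElem κ 0 hz]
        exact hκpos _ (List.getElem_mem hz)
      obtain ⟨t, ht1, ht2⟩ := step_analysis (hself' z (by omega)) htr hsub
        (hdiffcard z hz) hpos hstrip
      exact ⟨t, fun _ => ⟨ht1, ht2⟩⟩
    · exact ⟨0, fun hcon => absurd hcon hz⟩
  choose tf htf using H
  refine ⟨tf, fun z hz => (htf z hz).1, hself', ?_⟩
  intro z
  induction z with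
  | zero =>
    intro _ k
    rw [fD_of_cells_empty h0]
    simp
  | succ z ih =>
    intro hz k
    have hz' : z < κ.length := by omega
    rw [(htf z hz').2 k, ih (by omega) k, Multiset.range_succ, Multiset.map_cons,
      Multiset.countP_cons]

/-- Lemma `covers`: if `λ` is self-conjugate and `κ` is a composition
of `n` with `ℓ(κ) = d(λ)` parts, then `κ` symmetrically covers `λ` if and only if the
weakly decreasing rearrangement of `κ` equals `h(λ)`; moreover, in that case the
symmetric covering of `λ` of type `κ` is unique. -/
theorem symmetric_covering_iff_hooks
    (n : ℕ) (μ : YoungDiagram) (hμ : μ.card = n) (hself : μ.transpose = μ)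
    (κ : List ℕ) (hκpos : ∀ k ∈ κ, 0 < k) (hκsum : κ.sum = n)
    (hκlen : κ.length = ddiag μ) :
    ((∃ Λ : ℕ → YoungDiagram, IsSymCover μ κ Λ)
        ↔ (↑κ : Multiset ℕ) = (↑(hooks μ) : Multiset ℕ)) ∧
      ((↑κ : Multiset ℕ) = (↑(hooks μ) : Multiset ℕ) →
        ∀ Λ Λ' : ℕ → YoungDiagram, IsSymCover μ κ Λ → IsSymCover μ κ Λ' →
          ∀ z ≤ κ.length, Λ z = Λ' z) := by
  classical
  constructor
  · constructor
    · -- forward: a covering yields the multiset equality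
      rintro ⟨Λ, hc⟩
      obtain ⟨tf, htodd, hselfs, hfd⟩ := cover_analysis hκpos hc
      obtain ⟨h0, hend, hstep⟩ := hc
      have hcount : ∀ v : ℕ,
          ((Multiset.range (ddiag μ)).map tf).countP (fun x => v ≤ x)
            = ((Multiset.range (ddiag μ)).map (armOf μ)).countP (fun x => v ≤ x) := by
        intro v
        have h1 := hfd κ.length (le_refl _) (v : ℤ)
        rw [hend, hκlen] at h1
        have h2 := fD_mu_eq hself (v : ℤ)
        rw [FS_armSet_countP] at h2
        rw [Int.natAbs_natCast] at h1 h2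
        rw [← h1, h2]
      have hmapeq : (Multiset.range (ddiag μ)).map tf
          = (Multiset.range (ddiag μ)).map (armOf μ) :=
        multiset_eq_of_countP_ge hcount
      have hκlist : κ = (List.range κ.length).map (fun z => 2 * tf z + 1) := by
        apply List.ext_getElem (by simp)
        intro m h1 h2
        simp only [List.getElem_map, List.getElem_range]
        have h3 := htodd m h1
        rw [List.getD_eq_getElem κ 0 h1] at h3
        exact h3
      calc (↑κ : Multiset ℕ)
          = ↑((List.range κ.length).map fun z => 2 * tf z + 1) := by rw [← hκlist]
        _ = Multiset.map (fun z => 2 * tf z + 1) (Multiset.range κ.length) := by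
            rw [← Multiset.map_coe, Multiset.coe_range]
        _ = Multiset.map (fun x => 2 * x + 1) (Multiset.map tf (Multiset.range (ddiag μ))) := by
            rw [Multiset.map_map, hκlen]; rfl
        _ = Multiset.map (fun x => 2 * x + 1)
              (Multiset.map (armOf μ) (Multiset.range (ddiag μ))) := by rw [hmapeq]
        _ = Multiset.map (fun i => 2 * armOf μ i + 1) (Multiset.range (ddiag μ)) := by
            rw [Multiset.map_map]; rfl
        _ = ↑((List.range (ddiag μ)).map fun i => 2 * armOf μ i + 1) := by
            rw [← Multiset.coe_range, Multiset.map_coe]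
        _ = ↑(hooks μ) := by rw [← hooks_eq_list hself]
    · -- backward: construct the covering
      intro hmult
      set g : ℕ → ℕ := fun k => (k - 1) / 2 with hg
      have hcoe : (↑(κ.map g) : Multiset ℕ)
          = ↑((List.range (ddiag μ)).map (armOf μ)) := by
        rw [← Multiset.map_coe, hmult, hooks_eq_list hself, ← Multiset.map_coe,
          Multiset.map_map]
        apply Multiset.map_congr rfl
        intro i _
        show g (2 * armOf μ i + 1) = armOf μ i
        show (2 * armOf μ i + 1 - 1) / 2 = armOf μ i
        omega
      have hnodup : (κ.map g).Nodup := by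
        rw [← Multiset.coe_nodup, hcoe, Multiset.coe_nodup]
        exact armOf_nodup
      have hκodd : ∀ z < κ.length, κ.getD z 0 = 2 * g (κ.getD z 0) + 1 := by
        intro z hz
        have hmem : κ.getD z 0 ∈ κ := by
          rw [List.getD_eq_getElem κ 0 hz]
          exact List.getElem_mem hz
        have hmem2 : κ.getD z 0 ∈ hooks μ := by
          have h4 : κ.getD z 0 ∈ (↑κ : Multiset ℕ) := hmem
          rw [hmult] at h4
          exact h4
        rw [hooks_eq_list hself, List.mem_map] at hmem2
        obtain ⟨i, _, hi⟩ := hmem2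
        rw [← hi]
        show 2 * armOf μ i + 1 = 2 * ((2 * armOf μ i + 1 - 1) / 2) + 1
        omega
      set T : ℕ → Finset ℕ := fun z => ((κ.take z).map g).toFinset with hT
      have hT0 : T 0 = ∅ := by simp [hT]
      have hTstep : ∀ z < κ.length,
          T (z + 1) = insert (g (κ.getD z 0)) (T z) ∧ g (κ.getD z 0) ∉ T z := by
        intro z hz
        have htake : κ.take (z + 1) = κ.take z ++ [κ.getD z 0] := by
          rw [List.getD_eq_getElem κ 0 hz, List.take_concat_get' κ z hz]
        have hmapt : (κ.take (z + 1)).map g = (κ.take z).map g ++ [g (κ.getD z 0)] := by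
          rw [htake, List.map_append]
          rfl
        have hnod : ((κ.take (z + 1)).map g).Nodup := by
          rw [List.map_take]
          exact (List.take_sublist _ _).nodup hnodup
        constructor
        · rw [hT]
          simp only []
          rw [hmapt, List.toFinset_append]
          rw [show ([g (κ.getD z 0)]).toFinset = {g (κ.getD z 0)} from rfl]
          rw [Finset.union_comm, ← Finset.insert_eq]
        · intro hmem
          rw [hmapt] at hnod
          have hdisj := List.disjoint_of_nodup_append hnod
          rw [hT] at hmem
          simp only [] at hmem
          rw [List.mem_toFinset] at hmem
          exact hdisj hmem (List.mem_singleton_self _)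
      have hcards : ∀ z ≤ κ.length, (diagOf (T z)).card = (κ.take z).sum := by
        intro z
        induction z with
        | zero =>
          intro _
          show (diagOf (T 0)).cells.card = _
          rw [hT0, diagOf_empty]
          simp
        | succ z ih =>
          intro hz
          have hz' : z < κ.length := by omega
          obtain ⟨hT1, hT2⟩ := hTstep z hz'
          rw [hT1, diagOf_insert_card hT2, ih (by omega),
            List.sum_take_succ κ z hz', ← List.getD_eq_getElem κ 0 hz', ← hκodd z hz']
      refine ⟨fun z => diagOf (T z), ?_, ?_, ?_⟩
      · show (diagOf (T 0)).cells = ∅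
        rw [hT0, diagOf_empty]
      · show diagOf (T κ.length) = μ
        have hTd : T κ.length = armSet μ := by
          rw [hT]
          simp only []
          rw [List.take_length]
          have h5 : (κ.map g).toFinset = ((List.range (ddiag μ)).map (armOf μ)).toFinset := by
            rw [← List.toFinset_coe, hcoe, List.toFinset_coe]
          rw [h5]
          rfl
        rw [hTd, ← mu_eq_diagOf hself]
      · intro z hz
        obtain ⟨hT1, hT2⟩ := hTstep z hz
        refine ⟨?_, transpose_diagOf _, hcards (z + 1) (by omega), ?_⟩
        · apply diagOf_mono
          rw [hT1]
          exact Finset.subset_insert _ _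
        · refine ⟨-(g (κ.getD z 0) : ℤ), ?_⟩
          have hdiffeq := diagOf_insert_contents hT2
          have hcdiff : ((diagOf (insert (g (κ.getD z 0)) (T z))).cells
                \ (diagOf (T z)).cells).card = 2 * g (κ.getD z 0) + 1 := by
            have h6 := congrArg Multiset.card hdiffeq
            rw [Multiset.card_map, Multiset.card_map, Multiset.card_range] at h6
            rw [Finset.card_def]
            exact h6
          have hT1' : diagOf (T (z + 1)) = diagOf (insert (g (κ.getD z 0)) (T z)) := by
            rw [hT1]
          simp only [hT1']
          rw [range_map_norm, hcdiff]
          exact hdiffeq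
  · -- uniqueness
    intro hmult Λ Λ' hc hc' z hz
    obtain ⟨tf, ht1, hs1, hf1⟩ := cover_analysis hκpos hc
    obtain ⟨tf', ht1', hs1', hf1'⟩ := cover_analysis hκpos hc'
    apply eq_of_fD_eq (hs1 z hz) (hs1' z hz)
    intro k
    rw [hf1 z hz k, hf1' z hz k]
    congr 1
    apply Multiset.map_congr rfl
    intro i hi
    rw [Multiset.mem_range] at hi
    have e1 := ht1 i (by omega)
    have e2 := ht1' i (by omega)
    omega


end
end
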